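/- arXiv:1507.02370 — 4 statements merged into one kernel-verified Lean document; each statement's English description precedes it below -/
import Mathlib

section
/- Let G be a finite cyclic group and A a G-module that is a finitely generated free abelian group with a Z-basis X that is permuted by G (X is a G-set). Then the Herbrand quotient h(G, A) equals the product over G-orbit representatives x in X/G of the order of the stabilizer G_x. -/
variable (G : Type*) [Group G] [Fintype G] (A : Type*) [AddCommGroup A] [DistribMulAction G A]

/-- The norm map `a ↦ ∑_{τ ∈ G} τ • a`. -/
noncomputable def normMap : A →+ A := ∑ τ : G, DistribMulAction.toAddMonoidHom A τ

/-- The map `a ↦ a - σ • a`. -/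
def oneSubMap (σ : G) : A →+ A := AddMonoidHom.id A - DistribMulAction.toAddMonoidHom A σ

/-- The subgroup of `G`-fixed points `A^G`. -/
def fixedSub : AddSubgroup A where
  carrier := {a | ∀ τ : G, τ • a = a}
  zero_mem' := fun τ => smul_zero τ
  add_mem' := fun ha hb τ => by rw [smul_add, ha τ, hb τ]
  neg_mem' := fun ha τ => by rw [smul_neg, ha τ]

/-- `#H¹(G,A)` for `G` cyclic with generator `σ`, computed as `#(ker N_G / (1-σ)A)`. -/
noncomputable def H1card (σ : G) : ℕ :=
  Nat.card ((normMap G A).ker ⧸ ((oneSubMap G A σ).range.addSubgroupOf (normMap G A).ker))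

/-- `#Ĥ⁰(G,A) = (A^G : N_G A)`. -/
noncomputable def H0card : ℕ :=
  Nat.card (fixedSub G A ⧸ ((normMap G A).range.addSubgroupOf (fixedSub G A)))

/-- The Herbrand quotient `h(G,A) = #Ĥ⁰(G,A) / #H¹(G,A)`. -/
noncomputable def herbrand (σ : G) : ℚ := (H0card G A : ℚ) / (H1card G A σ : ℚ)

section Aux

open MulAction Finset
open scoped Classical

variable {G A}
variable {X : Type*} [MulAction G X] (b : Module.Basis X ℤ A)

/-- Coefficient of `τ • a` in the permuted basis. -/
theorem repr_smul_aux (hb : ∀ (τ : G) (x : X), τ • b x = b (τ • x)) (τ : G) (a : A) (y : X) :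
    b.repr (τ • a) y = b.repr a (τ⁻¹ • y) := by
  have : (Finsupp.lapply y).comp (b.repr.toLinearMap.comp
      (DistribMulAction.toAddMonoidHom A τ).toIntLinearMap)
      = (Finsupp.lapply (τ⁻¹ • y)).comp b.repr.toLinearMap := by
    apply b.ext
    intro x
    simp only [LinearMap.comp_apply, AddMonoidHom.coe_toIntLinearMap,
      DistribMulAction.toAddMonoidHom_apply, LinearEquiv.coe_coe, Finsupp.lapply_apply]
    rw [hb τ x, b.repr_self, b.repr_self, Finsupp.single_apply, Finsupp.single_apply]
    congr 1
    simp only [eq_iff_iff]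
    constructor
    · rintro rfl; simp
    · rintro rfl; simp
  simpa using DFunLike.congr_fun this a

/-- Coefficient of the norm of `a`. -/
theorem repr_norm_aux (hb : ∀ (τ : G) (x : X), τ • b x = b (τ • x)) (a : A) (y : X) :
    b.repr (normMap G A a) y = ∑ τ : G, b.repr a (τ • y) := by
  have h1 : normMap G A a = ∑ τ : G, τ • a := by
    rw [normMap, AddMonoidHom.finset_sum_apply]
    rfl
  rw [h1, map_sum, Finsupp.finset_sum_apply]
  refine Eq.symm (Fintype.sum_equiv (Equiv.inv G) _ _ fun τ => ?_)
  rw [repr_smul_aux b hb]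
  simp

/-- Coefficients of a fixed element are constant along orbits. -/
theorem repr_fixed_aux (hb : ∀ (τ : G) (x : X), τ • b x = b (τ • x)) {a : A}
    (ha : a ∈ fixedSub G A) (τ : G) (y : X) :
    b.repr a (τ • y) = b.repr a y := by
  conv_rhs => rw [← ha τ⁻¹, repr_smul_aux b hb, inv_inv]

theorem card_fiber_smul_eq (x z : X) (h : z ∈ orbit G x) :
    (Finset.univ.filter fun τ : G => τ • x = z).card = Nat.card (stabilizer G x) := by
  obtain ⟨τ₀, rfl⟩ := h
  rw [← Fintype.card_subtype, ← Nat.card_eq_fintype_card]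
  refine Nat.card_congr ⟨fun t => ⟨τ₀⁻¹ * t.1, ?_⟩, fun s => ⟨τ₀ * s.1, ?_⟩, ?_, ?_⟩
  · have := t.2
    simp only at this
    simp only [mem_stabilizer_iff, mul_smul, this, inv_smul_smul]
  · have := s.2
    simp only [mem_stabilizer_iff] at this
    simp only [mul_smul, this]
  · intro t; ext; simp
  · intro s; ext; simp

theorem card_stab_orbit_eq (x y : X) (h : y ∈ orbit G x) :
    Nat.card (stabilizer G y) = Nat.card (stabilizer G x) := by
  have h' : orbitRel G X y x := by rwa [orbitRel_apply]
  exact Nat.card_congr (stabilizerEquivStabilizerOfOrbitRel h').toEquiv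

theorem dvd_sum_smul (f : X → ℤ) (x : X) :
    (Nat.card (stabilizer G x) : ℤ) ∣ ∑ τ : G, f (τ • x) := by
  rw [Finset.sum_comp f (fun τ : G => τ • x)]
  refine Finset.dvd_sum fun z hz => ?_
  rw [Finset.mem_image] at hz
  obtain ⟨τ₀, -, rfl⟩ := hz
  have : ({τ ∈ univ | τ • x = τ₀ • x} : Finset G).card = Nat.card (stabilizer G x) :=
    card_fiber_smul_eq x (τ₀ • x) (mem_orbit x τ₀)
  rw [this, nsmul_eq_mul]
  exact Dvd.intro _ rfl

theorem sum_G_eq_sum_pow (σ : G) (hgen : ∀ τ : G, τ ∈ Subgroup.zpowers σ) (h : G → ℤ) :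
    ∑ τ : G, h τ = ∑ k ∈ Finset.range (Fintype.card G), h (σ ^ k) := by
  have hord : orderOf σ = Fintype.card G := by
    rw [orderOf_eq_card_of_forall_mem_zpowers hgen, Nat.card_eq_fintype_card]
  have hbij : Function.Bijective (fun k : Fin (Fintype.card G) => σ ^ (k : ℕ)) := by
    rw [Fintype.bijective_iff_injective_and_card]
    refine ⟨fun k l hkl => ?_, by simp⟩
    have hk : (k : ℕ) ∈ Set.Iio (orderOf σ) := by rw [hord]; exact k.2
    have hl : (l : ℕ) ∈ Set.Iio (orderOf σ) := by rw [hord]; exact l.2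
    exact Fin.ext (pow_injOn_Iio_orderOf hk hl hkl)
  rw [← Fin.sum_univ_eq_sum_range (fun k => h (σ ^ k)) (Fintype.card G)]
  exact (Fintype.sum_bijective _ hbij _ _ fun k => rfl).symm

theorem sum_range_mul_period (f : X → ℤ) (σ : G) (x : X) {m : ℕ} (u : ℕ)
    (hm : σ ^ m • x = x) :
    ∑ j ∈ Finset.range (u * m), f (σ ^ j • x) = u * ∑ j ∈ Finset.range m, f (σ ^ j • x) := by
  have hfix : ∀ v : ℕ, σ ^ (v * m) • x = x := by
    intro v
    induction v with
    | zero => simp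
    | succ v ih =>
      have : (v + 1) * m = v * m + m := by ring
      rw [this, pow_add, mul_smul, hm, ih]
  induction u with
  | zero => simp
  | succ u ih =>
    have h1 : (u + 1) * m = u * m + m := by ring
    have h2 : ∀ j, σ ^ (u * m + j) • x = σ ^ j • x := by
      intro j
      rw [add_comm, pow_add, mul_smul, hfix u]
    have h3 : ∑ j ∈ Finset.range m, f (σ ^ (u * m + j) • x)
        = ∑ j ∈ Finset.range m, f (σ ^ j • x) :=
      Finset.sum_congr rfl fun j _ => by rw [h2 j]
    rw [h1, Finset.sum_range_add, ih, h3]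
    push_cast
    ring

/-- Key vanishing: if `N a = 0` and `σ ^ t` fixes `x`, the partial orbit sum of the
coefficients of `a` along the `σ`-orbit of `x` of length `t` vanishes. -/
theorem orbit_sum_zero (σ : G) (hgen : ∀ τ : G, τ ∈ Subgroup.zpowers σ)
    (hb : ∀ (τ : G) (x : X), τ • b x = b (τ • x)) {a : A} (ha : normMap G A a = 0)
    (x : X) (t : ℕ) (ht : σ ^ t • x = x) :
    ∑ j ∈ Finset.range t, b.repr a (σ ^ j • x) = 0 := by
  set m := Function.minimalPeriod (σ • ·) x with hmdef
  set n := Fintype.card G with hndef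
  have hnpos : 0 < n := Fintype.card_pos
  have hσn : σ ^ n • x = x := by
    have : σ ^ n = 1 := by
      rw [hndef, ← Nat.card_eq_fintype_card, ← orderOf_eq_card_of_forall_mem_zpowers hgen]
      exact pow_orderOf_eq_one σ
    rw [this, one_smul]
  have hmn : m ∣ n := pow_smul_eq_iff_minimalPeriod_dvd.mp hσn
  have hmt : m ∣ t := pow_smul_eq_iff_minimalPeriod_dvd.mp ht
  have hσm : σ ^ m • x = x := pow_smul_eq_iff_minimalPeriod_dvd.mpr dvd_rfl
  have hmpos : 0 < m := Nat.pos_of_ne_zero fun h => by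
    rw [h] at hmn
    exact hnpos.ne' (Nat.eq_zero_of_zero_dvd hmn)
  have key : ∑ j ∈ Finset.range m, b.repr a (σ ^ j • x) = 0 := by
    have h0 : ∑ τ : G, b.repr a (τ • x) = 0 := by
      rw [← repr_norm_aux b hb, ha, map_zero, Finsupp.coe_zero, Pi.zero_apply]
    rw [sum_G_eq_sum_pow σ hgen, ← hndef] at h0
    obtain ⟨u, hu⟩ := hmn
    rw [hu, mul_comm m u, sum_range_mul_period _ σ x u hσm] at h0
    have hu0 : 0 < u := by
      rcases Nat.eq_zero_or_pos u with h | h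
      · rw [h, mul_zero] at hu; omega
      · exact h
    rcases mul_eq_zero.mp h0 with h | h
    · exact absurd h (by exact_mod_cast hu0.ne')
    · exact h
  obtain ⟨v, hv⟩ := hmt
  rw [hv, mul_comm, sum_range_mul_period _ σ x v hσm, key, mul_zero]

end Aux

/-- Let `G` be a finite cyclic group (generator `σ`) and `A` a `G`-module
which is a finitely generated free abelian group with a `ℤ`-basis `X` permuted by `G`.
Then the Herbrand quotient `h(G,A)` equals the product, over orbit representatives
`x ∈ X/G`, of the order of the stabilizer `G_x`. -/
theorem herbrand_eq_prod_card_stabilizer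
    (σ : G) (hgen : ∀ τ : G, τ ∈ Subgroup.zpowers σ)
    (X : Type*) [Finite X] [MulAction G X] (b : Module.Basis X ℤ A)
    (hb : ∀ (τ : G) (x : X), τ • b x = b (τ • x)) :
    herbrand G A σ =
      (∏ᶠ q : Quotient (MulAction.orbitRel G X),
        Nat.card (MulAction.stabilizer G q.out) : ℕ) := by
  classical
  have _instX : Fintype X := Fintype.ofFinite X
  set Q := Quotient (MulAction.orbitRel G X) with hQdef
  have _instQfin : Finite Q := Quotient.finite _
  have _instQ : Fintype Q := Fintype.ofFinite Q
  set qm : X → Q := fun x => Quotient.mk (MulAction.orbitRel G X) x with hqm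
  have hqm_out : ∀ x : X, (qm x).out ∈ MulAction.orbit G x := by
    intro x
    have : qm ((qm x).out) = qm x := Quotient.out_eq _
    exact Quotient.exact this
  have hqm_smul : ∀ (τ : G) (x : X), qm (τ • x) = qm x := fun τ x =>
    Quotient.sound (MulAction.mem_orbit x τ)
  set nn : Q → ℕ := fun q => Nat.card (MulAction.stabilizer G q.out) with hnn
  -- H¹ is trivial
  have h1 : H1card G A σ = 1 := by
    have htop : ((oneSubMap G A σ).range.addSubgroupOf (normMap G A).ker) = ⊤ := by
      rw [AddSubgroup.eq_top_iff']
      rintro ⟨a, ha⟩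
      rw [AddSubgroup.mem_addSubgroupOf]
      rw [AddMonoidHom.mem_ker] at ha
      -- construct the preimage under 1 - σ
      have hex : ∀ x : X, ∃ k : ℕ, σ ^ k • (qm x).out = x := by
        intro x
        obtain ⟨τ, hτ⟩ := hqm_out x
        obtain ⟨z, hz⟩ := Subgroup.mem_zpowers_iff.mp (hgen τ⁻¹)
        refine ⟨(z % (orderOf σ : ℤ)).toNat, ?_⟩
        have hzn : σ ^ (z % (orderOf σ : ℤ)).toNat = τ⁻¹ := by
          rw [← zpow_natCast, Int.toNat_of_nonneg
            (Int.emod_nonneg z (by exact_mod_cast (orderOf_pos σ).ne')),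
            zpow_mod_orderOf, hz]
        rw [hzn, ← hτ, inv_smul_smul]
      set i : X → ℕ := fun x => Nat.find (hex x) with hi
      set g : X → ℤ := fun x =>
        ∑ j ∈ Finset.range (i x + 1), b.repr a (σ ^ j • (qm x).out) with hg
      set c : A := b.repr.symm (Finsupp.equivFunOnFinite.symm g) with hc
      have hcx : ∀ x : X, b.repr c x = g x := by
        intro x
        rw [hc, LinearEquiv.apply_symm_apply]
        rfl
      refine ⟨c, ?_⟩
      apply b.repr.injective
      ext y
      have hone : oneSubMap G A σ c = c - σ • c := rfl
      rw [hone, map_sub, Finsupp.sub_apply, hcx, repr_smul_aux b hb, hcx]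
      -- now the combinatorial identity
      have hrr : qm (σ⁻¹ • y) = qm y := hqm_smul σ⁻¹ y
      have hout : (qm (σ⁻¹ • y)).out = (qm y).out := by rw [hrr]
      set i₁ := i y with hi₁
      set i₂ := i (σ⁻¹ • y) with hi₂
      have spec1 : σ ^ i₁ • (qm y).out = y := Nat.find_spec (hex y)
      have spec2 : σ ^ i₂ • (qm y).out = σ⁻¹ • y := by
        rw [← hout]
        exact Nat.find_spec (hex (σ⁻¹ • y))
      have min1 : ∀ k, σ ^ k • (qm y).out = y → i₁ ≤ k := fun k hk => Nat.find_min' (hex y) hk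
      have min2 : ∀ k, σ ^ k • (qm y).out = σ⁻¹ • y → i₂ ≤ k := by
        intro k hk
        refine Nat.find_min' (hex (σ⁻¹ • y)) ?_
        rw [hout]
        exact hk
      have h12 : i₁ ≤ i₂ + 1 := by
        refine min1 _ ?_
        rw [pow_succ', mul_smul, spec2, smul_inv_smul]
      have hgy : g y = ∑ j ∈ Finset.range (i₁ + 1), b.repr a (σ ^ j • (qm y).out) := rfl
      have hgy' : g (σ⁻¹ • y) =
          ∑ j ∈ Finset.range (i₂ + 1), b.repr a (σ ^ j • (qm y).out) := by
        show (∑ j ∈ Finset.range (i (σ⁻¹ • y) + 1),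
          b.repr a (σ ^ j • (qm (σ⁻¹ • y)).out)) = _
        rw [hout]
      by_cases hcase : i₁ = i₂ + 1
      · rw [hgy, hgy', hcase, Finset.sum_range_succ]
        have : σ ^ (i₂ + 1) • (qm y).out = y := by rw [← hcase, spec1]
        rw [this]
        ring
      · -- forced: i₁ = 0 and y is the chosen representative
        have hi₁0 : i₁ = 0 := by
          by_contra h0
          obtain ⟨j, hj⟩ : ∃ j, i₁ = j + 1 := ⟨i₁ - 1, by omega⟩
          have : σ ^ j • (qm y).out = σ⁻¹ • y := by
            have := spec1
            rw [hj, pow_succ', mul_smul] at this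
            exact eq_inv_smul_iff.mpr this
          have := min2 _ this
          omega
        have hyr : (qm y).out = y := by
          have := spec1
          rwa [hi₁0, pow_zero, one_smul] at this
        have hfix : σ ^ (i₂ + 1) • (qm y).out = (qm y).out := by
          rw [pow_succ', mul_smul, spec2, smul_inv_smul, hyr]
        have hzero : ∑ j ∈ Finset.range (i₂ + 1), b.repr a (σ ^ j • (qm y).out) = 0 :=
          orbit_sum_zero b σ hgen hb ha _ _ hfix
        rw [hgy, hgy', hzero, hi₁0]
        simp [hyr]
    have : H1card G A σ = ((oneSubMap G A σ).range.addSubgroupOf (normMap G A).ker).index := rfl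
    rw [this, htop, AddSubgroup.index_top]
  -- H⁰ computation
  have h0 : H0card G A = ∏ q : Q, nn q := by
    set piSub : AddSubgroup (Q → ℤ) :=
      AddSubgroup.pi Set.univ (fun q => AddSubgroup.zmultiples ((nn q : ℤ))) with hpS
    set F : fixedSub G A →+ (Q → ℤ) :=
      { toFun := fun a => fun q => b.repr a.1 q.out
        map_zero' := by funext q; simp
        map_add' := by intro a₁ a₂; funext q; simp } with hF
    have Fsurj : Function.Surjective F := by
      intro v
      set a : A := b.repr.symm (Finsupp.equivFunOnFinite.symm (fun x => v (qm x))) with ha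
      have hax : ∀ x : X, b.repr a x = v (qm x) := by
        intro x
        rw [ha, LinearEquiv.apply_symm_apply]
        rfl
      have hafix : a ∈ fixedSub G A := by
        intro τ
        apply b.repr.injective
        ext y
        rw [repr_smul_aux b hb, hax, hax, hqm_smul]
      refine ⟨⟨a, hafix⟩, ?_⟩
      funext q
      show b.repr a q.out = v q
      rw [hax]
      congr 1
      exact Quotient.out_eq q
    have hcomap : piSub.comap F = (normMap G A).range.addSubgroupOf (fixedSub G A) := by
      ext ⟨a, haf⟩
      rw [AddSubgroup.mem_comap, AddSubgroup.mem_addSubgroupOf]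
      have hmempi : F ⟨a, haf⟩ ∈ piSub ↔ ∀ q : Q, (nn q : ℤ) ∣ b.repr a q.out := by
        rw [hpS, AddSubgroup.mem_pi]
        constructor
        · intro h q
          have := h q (Set.mem_univ q)
          rwa [Int.mem_zmultiples_iff] at this
        · intro h q _
          rw [Int.mem_zmultiples_iff]
          exact h q
      rw [hmempi]
      constructor
      · intro h
        choose d hd using h
        set g : X → ℤ := fun x => if (qm x).out = x then d (qm x) else 0 with hg
        set c : A := b.repr.symm (Finsupp.equivFunOnFinite.symm g) with hc
        have hcx : ∀ x : X, b.repr c x = g x := by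
          intro x
          rw [hc, LinearEquiv.apply_symm_apply]
          rfl
        refine ⟨c, ?_⟩
        apply b.repr.injective
        ext y
        rw [repr_norm_aux b hb]
        have step1 : ∀ τ : G, b.repr c (τ • y) =
            (if τ • y = (qm y).out then d (qm y) else 0) := by
          intro τ
          rw [hcx, hg]
          simp only [hqm_smul τ y]
          by_cases h' : (qm y).out = τ • y
          · rw [if_pos h', if_pos h'.symm]
          · rw [if_neg h', if_neg (fun hh => h' hh.symm)]
        rw [Finset.sum_congr rfl (fun τ _ => step1 τ)]
        have step2 : (∑ τ : G, if τ • y = (qm y).out then d (qm y) else 0)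
            = ((Finset.univ.filter fun τ : G => τ • y = (qm y).out).card : ℤ) * d (qm y) := by
          rw [← Finset.sum_filter, Finset.sum_const, nsmul_eq_mul]
        have horb : (qm y).out ∈ MulAction.orbit G y := hqm_out y
        rw [step2, card_fiber_smul_eq y _ horb]
        obtain ⟨τ, hτ⟩ := hqm_out y
        have hry : b.repr a y = b.repr a (qm y).out := by
          rw [← hτ, repr_fixed_aux b hb haf]
        have hnny : nn (qm y) = Nat.card (MulAction.stabilizer G y) :=
          card_stab_orbit_eq y _ horb
        rw [hry, hd (qm y), hnny]
      · rintro ⟨c, rfl⟩ q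
        rw [repr_norm_aux b hb]
        exact dvd_sum_smul (fun x => b.repr c x) q.out
    have hidx : H0card G A = ((normMap G A).range.addSubgroupOf (fixedSub G A)).index := rfl
    rw [hidx, ← hcomap, AddSubgroup.index_comap_of_surjective _ Fsurj, hpS,
      AddSubgroup.index_pi]
    refine Finset.prod_congr rfl fun q _ => ?_
    rw [Int.index_zmultiples, Int.natAbs_natCast]
  rw [herbrand, h1, h0, finprod_eq_prod_of_fintype]
  simp [hnn]
  exact Finset.prod_congr rfl fun q _ => by congr 1
end

section
/- Let G be a finite cyclic group, A a G-module, and B a G-submodule of finite index in A such that B is a finitely generated free abelian group with a G-invariant Z-basis X. Then #H¹(G, A) = (A^G : N_G A) / ∏_{x ∈ X/G} #G_x. -/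
variable (G : Type*) [Group G] [Fintype G] (A : Type*) [AddCommGroup A] [DistribMulAction G A]

set_option linter.unusedSectionVars false
set_option maxHeartbeats 1000000

section Helpers
variable {G A}
set_option linter.unusedSectionVars false in
lemma normMap_apply (a : A) : normMap G A a = ∑ τ : G, τ • a := by
  simp [normMap]

lemma oneSubMap_apply (σ : G) (a : A) : oneSubMap G A σ a = a - σ • a := rfl

lemma mem_fixedSub {a : A} : a ∈ fixedSub G A ↔ ∀ τ : G, τ • a = a := Iff.rfl

lemma norm_oneSub_apply (σ : G) (a : A) : normMap G A (oneSubMap G A σ a) = 0 := by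
  rw [oneSubMap_apply, map_sub, normMap_apply, normMap_apply, sub_eq_zero]
  exact Fintype.sum_equiv (Equiv.mulRight σ⁻¹) _ _ (fun τ => by rw [smul_smul]; simp [mul_assoc])

lemma oneSub_norm_apply (σ : G) (a : A) : oneSubMap G A σ (normMap G A a) = 0 := by
  rw [oneSubMap_apply, sub_eq_zero, normMap_apply, Finset.smul_sum]
  exact Fintype.sum_equiv (Equiv.mulLeft σ⁻¹) _ _ (fun τ => by rw [smul_smul]; simp)

lemma smul_of_sigma_fixed {σ : G} (hgen : ∀ τ : G, τ ∈ Subgroup.zpowers σ)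
    {a : A} (ha : σ • a = a) (τ : G) : τ • a = a := by
  obtain ⟨n, hn⟩ := (mem_powers_iff_mem_zpowers.mpr (hgen τ) : τ ∈ Submonoid.powers σ)
  rw [← hn]
  clear hn
  induction n with
  | zero => simp
  | succ n ih =>
    show σ ^ (n + 1) • a = a
    rw [pow_succ, mul_smul, ha]
    exact ih

lemma fixedSub_eq_ker {σ : G} (hgen : ∀ τ : G, τ ∈ Subgroup.zpowers σ) :
    fixedSub G A = (oneSubMap G A σ).ker := by
  ext a
  rw [mem_fixedSub, AddMonoidHom.mem_ker, oneSubMap_apply, sub_eq_zero]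
  constructor
  · intro h; exact (h σ).symm
  · intro h; exact fun τ => smul_of_sigma_fixed hgen h.symm τ

end Helpers

section IndexJuggling
namespace HerbrandAux
open AddSubgroup
variable {A' : Type*} [AddCommGroup A']


/-- `(A:B) = (fA : fB) ⬝ (ker f : ker f ∩ B)` -/
lemma index_eq_relIndex_mul (f : A' →+ A') (B : AddSubgroup A') :
    B.index = B.relIndex f.ker * (B.map f).relIndex f.range := by
  have h1 : B.relIndex (f.ker ⊔ B) * (f.ker ⊔ B).index = B.index :=
    relIndex_mul_index le_sup_right
  have h2 : B.relIndex (f.ker ⊔ B) = B.relIndex f.ker := relIndex_sup_right f.ker B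
  have h3 : (f.ker ⊔ B).index = (B.map f).relIndex f.range := by
    have := relIndex_comap (H := B.map f) f ⊤
    rw [AddSubgroup.comap_map_eq, relIndex_top_right] at this
    rw [sup_comm, this, AddMonoidHom.range_eq_map]
  rw [← h1, h2, h3]

lemma chain_eq (f g : A' →+ A') (B : AddSubgroup A')
    (hrange : g.range ≤ f.ker) (hBg : B.map g ≤ B) :
    (B.map g).relIndex g.range * g.range.relIndex f.ker
      = (B.map g).relIndex (f.ker ⊓ B) * B.relIndex f.ker := by
  have hle : B.map g ≤ g.range := AddSubgroup.map_le_range g B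
  have h1 : (B.map g).relIndex g.range * g.range.relIndex f.ker = (B.map g).relIndex f.ker :=
    relIndex_mul_relIndex _ _ _ hle hrange
  have h2 : (B.map g).relIndex (f.ker ⊓ B) * (f.ker ⊓ B).relIndex f.ker
      = (B.map g).relIndex f.ker :=
    relIndex_mul_relIndex _ _ _ (le_inf (hle.trans hrange) hBg) inf_le_left
  have h3 : (f.ker ⊓ B).relIndex f.ker = B.relIndex f.ker := by
    rw [inf_comm, inf_relIndex_right]
  rw [h1, ← h2, h3]

/-- The core arithmetic: `h0A * h1B = h0B * h1A` plus finiteness transfer. -/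
lemma herbrand_core (f g : A' →+ A') (B : AddSubgroup A')
    (hrg : g.range ≤ f.ker) (hrf : f.range ≤ g.ker)
    (hBg : B.map g ≤ B) (hBf : B.map f ≤ B) (hn : B.index ≠ 0)
    (h0B h1B : ℕ) (hh0B : (B.map g).relIndex (f.ker ⊓ B) = h0B)
    (hh1B : (B.map f).relIndex (g.ker ⊓ B) = h1B) (hB0 : h0B ≠ 0) (hB1 : h1B ≠ 0) :
    h0B * (f.range.relIndex g.ker) = h1B * (g.range.relIndex f.ker)
      ∧ f.range.relIndex g.ker ≠ 0 ∧ g.range.relIndex f.ker ≠ 0 := by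
  set a1 := (B.map g).relIndex g.range with ha1
  set a2 := (B.map f).relIndex f.range with ha2
  set kf := B.relIndex f.ker with hkf
  set kg := B.relIndex g.ker with hkg
  set h0A := g.range.relIndex f.ker with hh0A
  set h1A := f.range.relIndex g.ker with hh1A
  have E1 : a1 * h0A = h0B * kf := by
    have := chain_eq f g B hrg hBg
    rw [hh0B] at this
    exact this
  have E2 : a2 * h1A = h1B * kg := by
    have := chain_eq g f B hrf hBf
    rw [hh1B] at this
    exact this
  have E3 : B.index = kf * a2 := index_eq_relIndex_mul f B
  have E4 : B.index = kg * a1 := index_eq_relIndex_mul g B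
  have K1 : a1 * a2 * h0A = h0B * B.index := by
    rw [E3]
    calc a1 * a2 * h0A = a1 * h0A * a2 := by ring
    _ = h0B * kf * a2 := by rw [E1]
    _ = h0B * (kf * a2) := by ring
  have K2 : a1 * a2 * h1A = h1B * B.index := by
    rw [E4]
    calc a1 * a2 * h1A = a2 * h1A * a1 := by ring
    _ = h1B * kg * a1 := by rw [E2]
    _ = h1B * (kg * a1) := by ring
  have hK1ne : a1 * a2 * h0A ≠ 0 := by
    rw [K1]; exact mul_ne_zero hB0 hn
  have hK2ne : a1 * a2 * h1A ≠ 0 := by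
    rw [K2]; exact mul_ne_zero hB1 hn
  have ha12 : a1 * a2 ≠ 0 := fun h => hK1ne (by rw [h, zero_mul])
  refine ⟨?_, fun h => hK2ne (by rw [h, mul_zero]), fun h => hK1ne (by rw [h, mul_zero])⟩
  have : a1 * a2 * (h0B * h1A) = a1 * a2 * (h1B * h0A) := by
    calc a1 * a2 * (h0B * h1A) = h0B * (a1 * a2 * h1A) := by ring
    _ = h0B * (h1B * B.index) := by rw [K2]
    _ = h1B * (h0B * B.index) := by ring
    _ = h1B * (a1 * a2 * h0A) := by rw [K1]
    _ = a1 * a2 * (h1B * h0A) := by ring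
  exact Nat.eq_of_mul_eq_mul_left (Nat.pos_of_ne_zero ha12) this

end HerbrandAux
end IndexJuggling

section Perm
open MulAction Finset AddSubgroup
open scoped Classical
variable {G A}
variable {B : AddSubgroup A} {X : Type*} [Fintype X] [MulAction G X]


/-- the element `τ • v` of `B`, for `B` stable. -/
def smulB (hstab : ∀ (τ : G), ∀ a ∈ B, τ • a ∈ B) (τ : G) (v : B) : B :=
  ⟨τ • (v : A), hstab τ v v.2⟩

variable (hstab : ∀ (τ : G), ∀ a ∈ B, τ • a ∈ B) (b : Module.Basis X ℤ B)

/-- L1 : expansion in coordinates. -/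
lemma coe_eq_sum_repr (v : B) : (v : A) = ∑ x : X, b.repr v x • (b x : A) := by
  conv_lhs => rw [← b.sum_repr v]
  push_cast
  rfl

/-- smul against zsmul commute -/
lemma smul_zsmul' (τ : G) (n : ℤ) (a : A) : τ • (n • a) = n • (τ • a) :=
  map_zsmul (DistribMulAction.toAddMonoidHom A τ) n a

/-- L2 : coordinates of `τ • v`. -/
lemma repr_smulB (hb : ∀ (τ : G) (x : X), τ • (b x : A) = (b (τ • x) : A))
    (τ : G) (v : B) (y : X) :
    b.repr (smulB hstab τ v) y = b.repr v (τ⁻¹ • y) := by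
  have key : smulB hstab τ v = ∑ x : X, b.repr v (τ⁻¹ • x) • b x := by
    apply Subtype.ext
    push_cast
    show τ • (v : A) = ∑ x : X, b.repr v (τ⁻¹ • x) • (b x : A)
    conv_lhs => rw [coe_eq_sum_repr b v]
    rw [Finset.smul_sum]
    refine Fintype.sum_equiv (MulAction.toPerm τ) _ _ (fun x => ?_)
    simp only [MulAction.toPerm_apply, inv_smul_smul]
    rw [smul_zsmul', hb τ x]
  rw [key]
  rw [map_sum]
  simp [Finsupp.single_apply]

/-- fibers of the orbit map are cosets of the stabilizer. -/
lemma fiber_card (y : X) (τ₀ : G) :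
    (Finset.univ.filter (fun τ : G => τ • y = τ₀ • y)).card
      = Nat.card (MulAction.stabilizer G y) := by
  rw [Nat.card_eq_fintype_card, ← Fintype.card_subtype]
  apply Fintype.card_congr
  refine Equiv.mk (fun τ => ⟨τ₀⁻¹ * τ.1, by rw [MulAction.mem_stabilizer_iff, mul_smul, τ.2, inv_smul_smul]⟩)
    (fun s => ⟨τ₀ * s.1, by rw [mul_smul, MulAction.mem_stabilizer_iff.mp s.2]⟩) ?_ ?_
  · intro τ; ext; simp
  · intro s; ext; simp

lemma image_orbit_eq (y : X) :
    Finset.univ.image (fun τ : G => τ • y)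
      = Finset.univ.filter (fun x =>
          Quotient.mk (MulAction.orbitRel G X) x = Quotient.mk (MulAction.orbitRel G X) y) := by
  ext x
  simp only [Finset.mem_image, Finset.mem_univ, true_and, Finset.mem_filter]
  rw [Quotient.eq]
  show _ ↔ MulAction.orbitRel G X x y
  rw [MulAction.orbitRel_apply, MulAction.mem_orbit_iff]

/-- L3 : sum over the group versus sum over an orbit. -/
lemma sum_smul_orbit {M : Type*} [AddCommMonoid M] (c : X → M) (y : X) :
    ∑ τ : G, c (τ • y)
      = Nat.card (MulAction.stabilizer G y) •
          ∑ x ∈ Finset.univ.filter (fun x =>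
            Quotient.mk (MulAction.orbitRel G X) x = Quotient.mk (MulAction.orbitRel G X) y), c x := by
  rw [Finset.sum_comp c (fun τ : G => τ • y), ← image_orbit_eq, Finset.smul_sum]
  refine Finset.sum_congr rfl (fun x hx => ?_)
  simp only [Finset.mem_image, Finset.mem_univ, true_and] at hx
  obtain ⟨τ₀, rfl⟩ := hx
  rw [fiber_card]


/-- L4 : coordinates of the norm of an element. -/
lemma repr_norm (hstab : ∀ (τ : G), ∀ a ∈ B, τ • a ∈ B)
    (hb : ∀ (τ : G) (x : X), τ • (b x : A) = (b (τ • x) : A))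
    (v : B) (hN : normMap G A (v : A) ∈ B) (y : X) :
    b.repr ⟨normMap G A (v : A), hN⟩ y = ∑ τ : G, b.repr v (τ • y) := by
  have key : (⟨normMap G A (v : A), hN⟩ : B) = ∑ τ : G, smulB hstab τ v := by
    apply Subtype.ext
    push_cast
    rw [normMap_apply]
    rfl
  rw [key, map_sum, Finsupp.finset_sum_apply,
    Finset.sum_congr rfl (fun τ _ => repr_smulB hstab b hb τ v y)]
  exact Fintype.sum_equiv (Equiv.inv G) _ _ (fun τ => rfl)

/-- C1 : the norm of a basis vector. -/
lemma norm_basis (hb : ∀ (τ : G) (x : X), τ • (b x : A) = (b (τ • x) : A)) (y : X) :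
    normMap G A (b y : A)
      = Nat.card (MulAction.stabilizer G y) •
          ∑ x ∈ Finset.univ.filter (fun x =>
            Quotient.mk (MulAction.orbitRel G X) x = Quotient.mk (MulAction.orbitRel G X) y),
            (b x : A) := by
  rw [normMap_apply]
  calc ∑ τ : G, τ • (b y : A) = ∑ τ : G, (b (τ • y) : A) :=
        Finset.sum_congr rfl (fun τ _ => hb τ y)
  _ = _ := sum_smul_orbit (fun x => (b x : A)) y

/-- F1 : elements of `B` killed by the norm lie in `(1-σ)B`. -/
lemma ker_norm_le_map_oneSub (hstab : ∀ (τ : G), ∀ a ∈ B, τ • a ∈ B)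
    {σ : G} (hgen : ∀ τ : G, τ ∈ Subgroup.zpowers σ)
    (hb : ∀ (τ : G) (x : X), τ • (b x : A) = (b (τ • x) : A)) :
    (normMap G A).ker ⊓ B ≤ B.map (oneSubMap G A σ) := by
  intro v hv
  obtain ⟨hvk, hvB⟩ := AddSubgroup.mem_inf.mp hv
  set vB : B := ⟨v, hvB⟩ with hvBdef
  set c := b.repr vB with hc
  have step2 : ∀ (y : X) (τ : G), (b y : A) - (b (τ • y) : A) ∈ B.map (oneSubMap G A σ) := by
    intro y τ
    obtain ⟨n, hn⟩ := (mem_powers_iff_mem_zpowers.mpr (hgen τ) : τ ∈ Submonoid.powers σ)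
    rw [← hn]; clear hn
    induction n with
    | zero => simpa using (B.map (oneSubMap G A σ)).zero_mem
    | succ n ih =>
      have h1 : (b (σ ^ n • y) : A) - σ • (b (σ ^ n • y) : A) ∈ B.map (oneSubMap G A σ) :=
        ⟨(b (σ ^ n • y) : A), (b (σ ^ n • y)).2, rfl⟩
      have h2 := add_mem ih h1
      have h3 : (b y : A) - (b (σ ^ (n + 1) • y) : A)
          = ((b y : A) - (b (σ ^ n • y) : A))
            + ((b (σ ^ n • y) : A) - σ • (b (σ ^ n • y) : A)) := by
        rw [hb σ (σ ^ n • y), ← mul_smul, ← pow_succ']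
        abel
      show (b y : A) - (b (σ ^ (n + 1) • y) : A) ∈ B.map (oneSubMap G A σ)
      rw [h3]
      exact h2
  have hrepr0 : ∀ y : X, ∑ τ : G, c (τ • y) = 0 := by
    intro y
    have hNv : normMap G A (vB : A) = 0 := hvk
    have hNmem : normMap G A (vB : A) ∈ B := by rw [hNv]; exact B.zero_mem
    have h0 : (⟨normMap G A (vB : A), hNmem⟩ : B) = 0 := Subtype.ext hNv
    have h1 := repr_norm b hstab hb vB hNmem y
    rw [h0] at h1
    simpa using h1.symm
  have step1 : ∀ q : Quotient (MulAction.orbitRel G X),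
      ∑ x ∈ Finset.univ.filter (fun x => Quotient.mk (MulAction.orbitRel G X) x = q), c x = 0 := by
    intro q
    have h1 := hrepr0 q.out
    rw [sum_smul_orbit (M := ℤ) (fun x => c x) q.out, Quotient.out_eq] at h1
    have hpos : 0 < Nat.card (MulAction.stabilizer G q.out) := Nat.card_pos
    rw [nsmul_eq_mul] at h1
    rcases mul_eq_zero.mp h1 with h | h
    · exact absurd (Int.natCast_eq_zero.mp h) hpos.ne'
    · exact h
  have hdecomp : v = ∑ x : X, c x •
      ((b x : A) - (b ((Quotient.mk (MulAction.orbitRel G X) x).out) : A)) := by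
    have h1 : v = ∑ x : X, c x • (b x : A) := coe_eq_sum_repr b vB
    have h2 : ∑ x : X, c x • (b ((Quotient.mk (MulAction.orbitRel G X) x).out) : A) = 0 := by
      rw [← Finset.sum_fiberwise Finset.univ (fun x => Quotient.mk (MulAction.orbitRel G X) x)
        (fun x => c x • (b ((Quotient.mk (MulAction.orbitRel G X) x).out) : A))]
      refine Finset.sum_eq_zero (fun q _ => ?_)
      rw [Finset.sum_congr rfl
        (fun x hx => by rw [(Finset.mem_filter.mp hx).2]), ← Finset.sum_smul, step1 q, zero_smul]
    simp only [smul_sub]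
    rw [Finset.sum_sub_distrib, h2, sub_zero]
    exact h1
  rw [hdecomp]
  refine sum_mem (fun x _ => zsmul_mem ?_ _)
  obtain ⟨τ, hτ⟩ := MulAction.mem_orbit_iff.mp
    (MulAction.orbitRel_apply.mp (@Quotient.mk_out _ (MulAction.orbitRel G X) x))
  rw [← hτ]
  exact step2 x τ

/-- the sum of the basis vectors in an orbit. -/
noncomputable def orbSum (q : Quotient (MulAction.orbitRel G X)) : A :=
  ∑ x ∈ Finset.univ.filter (fun x => Quotient.mk (MulAction.orbitRel G X) x = q), (b x : A)

lemma quot_mk_smul (τ : G) (x : X) :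
    Quotient.mk (MulAction.orbitRel G X) (τ • x) = Quotient.mk (MulAction.orbitRel G X) x :=
  Quotient.sound (MulAction.orbitRel_apply.mpr (MulAction.mem_orbit x τ))

lemma orbSum_mem (q : Quotient (MulAction.orbitRel G X)) : orbSum b q ∈ B :=
  sum_mem (fun x _ => (b x).2)

lemma smul_orbSum (hb : ∀ (τ : G) (x : X), τ • (b x : A) = (b (τ • x) : A))
    (τ : G) (q : Quotient (MulAction.orbitRel G X)) :
    τ • orbSum b q = orbSum b q := by
  unfold orbSum
  rw [Finset.smul_sum]
  refine Finset.sum_bij' (fun x _ => τ • x) (fun x _ => τ⁻¹ • x) ?_ ?_ ?_ ?_ ?_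
  · intro x hx
    simp only [Finset.mem_filter, Finset.mem_univ, true_and] at hx ⊢
    rw [quot_mk_smul, hx]
  · intro x hx
    simp only [Finset.mem_filter, Finset.mem_univ, true_and] at hx ⊢
    rw [quot_mk_smul, hx]
  · intro x _; simp
  · intro x _; simp
  · intro x _; rw [hb τ x]

lemma orbSum_mem_ker (hb : ∀ (τ : G) (x : X), τ • (b x : A) = (b (τ • x) : A))
    (σ : G) (q : Quotient (MulAction.orbitRel G X)) :
    orbSum b q ∈ (oneSubMap G A σ).ker := by
  rw [AddMonoidHom.mem_ker, oneSubMap_apply, smul_orbSum b hb, sub_self]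

lemma repr_orbSum (q q' : Quotient (MulAction.orbitRel G X)) :
    b.repr ⟨orbSum b q, orbSum_mem b q⟩ q'.out = if q' = q then 1 else 0 := by
  have key : (⟨orbSum b q, orbSum_mem b q⟩ : B)
      = ∑ x ∈ Finset.univ.filter (fun x => Quotient.mk (MulAction.orbitRel G X) x = q), b x := by
    apply Subtype.ext
    push_cast
    rfl
  rw [key, map_sum, Finsupp.finset_sum_apply]
  simp only [Module.Basis.repr_self, Finsupp.single_apply]
  rw [Finset.sum_ite_eq' (Finset.univ.filter
    (fun x => Quotient.mk (MulAction.orbitRel G X) x = q)) q'.out (fun _ => (1 : ℤ))]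
  simp only [Finset.mem_filter, Finset.mem_univ, true_and, Quotient.out_eq]

/-- constancy of coordinates of fixed vectors along orbits -/
lemma repr_const (hstab : ∀ (τ : G), ∀ a ∈ B, τ • a ∈ B)
    (hb : ∀ (τ : G) (x : X), τ • (b x : A) = (b (τ • x) : A)) (v : B)
    (hfix : ∀ τ : G, τ • (v : A) = (v : A)) (τ : G) (y : X) :
    b.repr v (τ • y) = b.repr v y := by
  have h1 : smulB hstab τ⁻¹ v = v := Subtype.ext (hfix τ⁻¹)
  have h2 := repr_smulB hstab b hb τ⁻¹ v y
  rw [h1, inv_inv] at h2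
  exact h2.symm

/-- F2 : the index of `N(B)` inside `B ∩ ker(1-σ)` is the product of stabilizer orders. -/
lemma relIndex_norm_eq_prod (hstab : ∀ (τ : G), ∀ a ∈ B, τ • a ∈ B)
    {σ : G} (hgen : ∀ τ : G, τ ∈ Subgroup.zpowers σ)
    (hb : ∀ (τ : G) (x : X), τ • (b x : A) = (b (τ • x) : A)) :
    (B.map (normMap G A)).relIndex ((oneSubMap G A σ).ker ⊓ B)
      = ∏ q : Quotient (MulAction.orbitRel G X), Nat.card (MulAction.stabilizer G q.out) := by
  set K : AddSubgroup A := (oneSubMap G A σ).ker ⊓ B with hK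
  set n : Quotient (MulAction.orbitRel G X) → ℕ :=
    fun q => Nat.card (MulAction.stabilizer G q.out) with hn
  have hn0 : ∀ q, NeZero (n q) := fun q => ⟨Nat.card_pos.ne'⟩
  -- the coordinate map
  set ρ : ↥K →+ B := (AddSubgroup.inclusion inf_le_right) with hρ
  have hρv : ∀ v : ↥K, ((ρ v : B) : A) = (v : A) := fun v => rfl
  set Φ : ↥K →+ (∀ q : Quotient (MulAction.orbitRel G X), ZMod (n q)) :=
    AddMonoidHom.mk' (fun v q => ((b.repr (ρ v) q.out : ℤ) : ZMod (n q)))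
      (fun v w => by
        funext q
        simp only [map_add, Finsupp.add_apply, Int.cast_add, Pi.add_apply]) with hΦ
  have hΦapp : ∀ (v : ↥K) q, Φ v q = ((b.repr (ρ v) q.out : ℤ) : ZMod (n q)) := fun v w => rfl
  -- membership of orbit sums
  have hKmem : ∀ q, orbSum b q ∈ K := fun q =>
    AddSubgroup.mem_inf.mpr ⟨orbSum_mem_ker b hb σ q, orbSum_mem b q⟩
  have hρS : ∀ q, ρ ⟨orbSum b q, hKmem q⟩ = ⟨orbSum b q, orbSum_mem b q⟩ := fun q => rfl
  -- surjectivity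
  have hsurj : Function.Surjective Φ := by
    intro t
    refine ⟨∑ q, ((t q).val : ℤ) • ⟨orbSum b q, hKmem q⟩, ?_⟩
    funext q'
    rw [map_sum, Finset.sum_apply]
    have hterm : ∀ q, (Φ (((t q).val : ℤ) • (⟨orbSum b q, hKmem q⟩ : ↥K))) q'
        = if q' = q then (((t q).val : ℤ) : ZMod (n q')) else 0 := by
      intro q
      rw [map_zsmul, Pi.smul_apply, hΦapp, hρS, repr_orbSum]
      split_ifs with h
      · simp
      · simp
    rw [Finset.sum_congr rfl (fun q _ => hterm q)]
    rw [Finset.sum_ite_eq (Finset.univ) q' (fun q => (((t q).val : ℤ) : ZMod (n q')))]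
    simp only [Finset.mem_univ, if_true]
    push_cast
    exact ZMod.natCast_rightInverse (t q')
  -- the kernel is the image of the norm
  have hker : Φ.ker = (B.map (normMap G A)).addSubgroupOf K := by
    ext v
    rw [AddMonoidHom.mem_ker, AddSubgroup.mem_addSubgroupOf]
    constructor
    · intro h
      -- v is fixed and its coordinates are divisible: v ∈ N B
      have hfixσ : σ • (v : A) = (v : A) := by
        have := (AddSubgroup.mem_inf.mp v.2).1
        rw [AddMonoidHom.mem_ker, oneSubMap_apply, sub_eq_zero] at this
        exact this.symm
      have hfix : ∀ τ : G, τ • (v : A) = (v : A) :=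
        fun τ => smul_of_sigma_fixed hgen hfixσ τ
      set c := b.repr (ρ v) with hc
      have hconst : ∀ (τ : G) (y : X), c (τ • y) = c y :=
        fun τ y => repr_const b hstab hb (ρ v) hfix τ y
      have hdvd : ∀ q, ((n q : ℤ)) ∣ c q.out := by
        intro q
        have := congrFun h q
        rw [hΦapp] at this
        exact (ZMod.intCast_zmod_eq_zero_iff_dvd _ _).mp this
      choose m hm using hdvd
      -- decomposition of v as a combination of orbit sums
      have hdecomp : (v : A) = ∑ q : Quotient (MulAction.orbitRel G X), c q.out • orbSum b q := by
        have h1 : (v : A) = ∑ x : X, c x • (b x : A) := coe_eq_sum_repr b (ρ v)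
        rw [h1, ← Finset.sum_fiberwise Finset.univ
          (fun x => Quotient.mk (MulAction.orbitRel G X) x) (fun x => c x • (b x : A))]
        refine Finset.sum_congr rfl (fun q _ => ?_)
        rw [orbSum, Finset.smul_sum]
        refine Finset.sum_congr rfl (fun x hx => ?_)
        have hxq : Quotient.mk (MulAction.orbitRel G X) x = q := (Finset.mem_filter.mp hx).2
        obtain ⟨τ, hτ⟩ : ∃ τ : G, τ • q.out = x := by
          have h0 := @Quotient.mk_out _ (MulAction.orbitRel G X) x
          rw [hxq] at h0
          exact MulAction.mem_orbit_iff.mp (MulAction.orbitRel_apply.mp ((MulAction.orbitRel G X).iseqv.symm h0))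
        rw [← hτ, hconst τ q.out]
      refine ⟨∑ q, m q • (b q.out : A), sum_mem (fun q _ => zsmul_mem (b q.out).2 _), ?_⟩
      rw [map_sum, hdecomp]
      refine (Finset.sum_congr rfl (fun q _ => ?_)).symm
      have hnb := norm_basis b hb q.out
      rw [Quotient.out_eq] at hnb
      rw [map_zsmul, hnb, hm q]
      rw [mul_comm, mul_smul]
      congr 1
      rw [natCast_zsmul]
      rfl
    · rintro ⟨w, hwB, hw⟩
      funext q
      rw [hΦapp, Pi.zero_apply]
      have hNmem : normMap G A ((⟨w, hwB⟩ : B) : A) ∈ B := by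
        show normMap G A w ∈ B
        rw [hw]; exact (AddSubgroup.mem_inf.mp v.2).2
      have heq : ρ v = ⟨normMap G A ((⟨w, hwB⟩ : B) : A), hNmem⟩ := by
        apply Subtype.ext
        show (v : A) = normMap G A w
        rw [hw]
      rw [heq, repr_norm b hstab hb ⟨w, hwB⟩ hNmem q.out]
      rw [sum_smul_orbit (M := ℤ) (fun x => b.repr ⟨w, hwB⟩ x) q.out, Quotient.out_eq]
      rw [nsmul_eq_mul]
      rw [ZMod.intCast_zmod_eq_zero_iff_dvd]
      exact Dvd.intro _ rfl
  -- conclude by the first isomorphism theorem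
  show ((B.map (normMap G A)).addSubgroupOf K).index = _
  rw [← hker, AddSubgroup.index]
  rw [Nat.card_congr (QuotientAddGroup.quotientKerEquivOfSurjective Φ hsurj).toEquiv]
  rw [Nat.card_pi]
  exact Finset.prod_congr rfl (fun q _ => Nat.card_zmod (n q))

end Perm

/-- Let `G` be a finite cyclic group (generator `σ`), `A` a `G`-module and
`B` a `G`-stable subgroup of finite index in `A` which is free abelian with a `G`-invariant
`ℤ`-basis `X`.  Then `#H¹(G,A) = (A^G : N_G A) / ∏_{x ∈ X/G} #G_x`. -/
theorem h1_card_eq_index_div_prod_card_stabilizer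
    (σ : G) (hgen : ∀ τ : G, τ ∈ Subgroup.zpowers σ)
    (B : AddSubgroup A) (hstab : ∀ (τ : G), ∀ a ∈ B, τ • a ∈ B) [Finite (A ⧸ B)]
    (X : Type*) [Finite X] [MulAction G X] (b : Module.Basis X ℤ B)
    (hb : ∀ (τ : G) (x : X), τ • (b x : A) = (b (τ • x) : A)) :
    (H1card G A σ : ℚ) =
      (H0card G A : ℚ) /
        (∏ᶠ q : Quotient (MulAction.orbitRel G X),
          Nat.card (MulAction.stabilizer G q.out) : ℕ) := by
  classical
  letI : Fintype X := Fintype.ofFinite X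
  set f := oneSubMap G A σ with hf
  set g := normMap G A with hg
  set P : ℕ := ∏ q : Quotient (MulAction.orbitRel G X),
    Nat.card (MulAction.stabilizer G q.out) with hPdef
  have hrg : g.range ≤ f.ker := by
    rintro _ ⟨a, rfl⟩
    exact oneSub_norm_apply σ a
  have hrf : f.range ≤ g.ker := by
    rintro _ ⟨a, rfl⟩
    exact norm_oneSub_apply σ a
  have hBf : B.map f ≤ B := by
    rintro _ ⟨a, ha, rfl⟩
    rw [hf, oneSubMap_apply]
    exact sub_mem ha (hstab σ a ha)
  have hBg : B.map g ≤ B := by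
    rintro _ ⟨a, ha, rfl⟩
    rw [hg, normMap_apply]
    exact sum_mem (fun τ _ => hstab τ a ha)
  have hn : B.index ≠ 0 := AddSubgroup.index_ne_zero_of_finite
  have hh1B : (B.map f).relIndex (g.ker ⊓ B) = 1 :=
    AddSubgroup.relIndex_eq_one.mpr (ker_norm_le_map_oneSub b hstab hgen hb)
  have hh0B : (B.map g).relIndex (f.ker ⊓ B) = P := relIndex_norm_eq_prod b hstab hgen hb
  have hP0 : P ≠ 0 := Finset.prod_ne_zero_iff.mpr (fun q _ => Nat.card_pos.ne')
  obtain ⟨hmain, hne1, hne0⟩ :=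
    HerbrandAux.herbrand_core f g B hrg hrf hBg hBf hn P 1 hh0B hh1B hP0 one_ne_zero
  have hH1 : H1card G A σ = f.range.relIndex g.ker := rfl
  have hH0 : H0card G A = g.range.relIndex f.ker := by
    unfold H0card
    rw [fixedSub_eq_ker hgen]
    rfl
  have hfin : (∏ᶠ q : Quotient (MulAction.orbitRel G X),
      Nat.card (MulAction.stabilizer G q.out)) = P := finprod_eq_prod_of_fintype _
  rw [hH1, hH0, hfin]
  rw [eq_div_iff (by exact_mod_cast hP0)]
  rw [one_mul] at hmain
  exact_mod_cast (mul_comm (f.range.relIndex g.ker) P ▸ hmain)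
end

section
/- Let G = {1, σ} be a group of order 2 and A a G-module that is a finitely generated abelian group. Then #H¹(G, A) = 2^{r₋(A)} · #(A⁺[2]) / (A : A⁺ + A⁻), where r₋(A) is the rank of A⁻, A⁺ = A^G, A⁻ = {a ∈ A : σa = -a}, and A⁺[2] is the 2-torsion of A⁺. -/
variable (G : Type*) [Group G] [Fintype G] (A : Type*) [AddCommGroup A] [DistribMulAction G A]

/-- The subgroup `A⁻ = {a | σ • a = -a}`. -/
def minusSub (σ : G) : AddSubgroup A where
  carrier := {a | σ • a = -a}
  zero_mem' := by simp
  add_mem' := fun {a b} ha hb => by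
    simp only [Set.mem_setOf_eq] at *; rw [smul_add, ha, hb, neg_add]
  neg_mem' := fun {a} ha => by
    simp only [Set.mem_setOf_eq] at *; rw [smul_neg, ha, neg_neg]

section Helpers

set_option linter.unusedSectionVars false

/-- The doubling homomorphism `b ↦ b + b`. -/
def dblHom (B : Type*) [AddCommGroup B] : B →+ B :=
  AddMonoidHom.mk' (fun b => b + b) (fun a b => add_add_add_comm a b a b)

lemma dblHom_apply {B : Type*} [AddCommGroup B] (b : B) : dblHom B b = b + b := rfl

/-- Key counting statement: `#(B/2B) = 2^rank B * #B[2]`, together with finiteness. -/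
def KeyStmt (B : Type*) [AddCommGroup B] : Prop :=
  (dblHom B).range.index = 2 ^ Module.finrank ℤ B * Nat.card (dblHom B).ker
    ∧ (dblHom B).range.index ≠ 0

variable {B C : Type*} [AddCommGroup B] [AddCommGroup C]

lemma key_transport (e : B ≃+ C) (h : KeyStmt C) : KeyStmt B := by
  obtain ⟨h1, h2⟩ := h
  have hcomap : ((dblHom C).range.comap e.toAddMonoidHom) = (dblHom B).range := by
    ext b
    simp only [AddSubgroup.mem_comap, AddMonoidHom.mem_range, dblHom_apply]
    constructor
    · rintro ⟨x, hx⟩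
      exact ⟨e.symm x, by apply e.injective; simpa [map_add] using hx⟩
    · rintro ⟨y, hy⟩
      exact ⟨e y, by rw [← map_add, hy]; rfl⟩
  have hidx : (dblHom B).range.index = (dblHom C).range.index := by
    rw [← hcomap]
    exact AddSubgroup.index_comap_of_surjective _ e.surjective
  have hker : Nat.card (dblHom B).ker = Nat.card (dblHom C).ker := by
    refine Nat.card_congr ⟨fun x => ⟨e x, ?_⟩, fun y => ⟨e.symm y, ?_⟩, fun x => by simp,
      fun y => by simp⟩
    · have := x.2
      simp only [AddMonoidHom.mem_ker, dblHom_apply] at this ⊢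
      rw [← map_add, this, map_zero]
    · have := y.2
      simp only [AddMonoidHom.mem_ker, dblHom_apply] at this ⊢
      apply e.injective
      rw [map_add, map_zero]
      simpa using this
  have hrank : Module.finrank ℤ B = Module.finrank ℤ C :=
    e.toIntLinearEquiv.finrank_eq
  exact ⟨by rw [hidx, hrank, hker, h1], by rw [hidx]; exact h2⟩

lemma AddSubgroup.index_prod' {G G' : Type*} [AddCommGroup G] [AddCommGroup G']
    (H : AddSubgroup G) (K : AddSubgroup G') : (H.prod K).index = H.index * K.index := by
  let f : G × G' →+ (G ⧸ H) × (G' ⧸ K) :=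
    AddMonoidHom.prodMap (QuotientAddGroup.mk' H) (QuotientAddGroup.mk' K)
  have hsurj : Function.Surjective f := by
    rintro ⟨x, y⟩
    obtain ⟨a, rfl⟩ := QuotientAddGroup.mk'_surjective H x
    obtain ⟨b, rfl⟩ := QuotientAddGroup.mk'_surjective K y
    exact ⟨(a, b), rfl⟩
  have hker : f.ker = H.prod K := by
    ext ⟨a, b⟩
    show (QuotientAddGroup.mk' H a, QuotientAddGroup.mk' K b) = 0 ↔ _
    rw [Prod.ext_iff]
    simp only [Prod.fst_zero, Prod.snd_zero, QuotientAddGroup.mk'_apply,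
      QuotientAddGroup.eq_zero_iff, AddSubgroup.mem_prod]
  have e := QuotientAddGroup.quotientKerEquivOfSurjective f hsurj
  have h1 : (H.prod K).index = f.ker.index := by rw [hker]
  rw [h1, AddSubgroup.index, Nat.card_congr e.toEquiv, Nat.card_prod]
  rfl

lemma key_int : (dblHom ℤ).range = AddSubgroup.zmultiples (2 : ℤ) := by
  ext x
  simp only [AddMonoidHom.mem_range, dblHom_apply, AddSubgroup.mem_zmultiples_iff]
  constructor
  · rintro ⟨y, rfl⟩; exact ⟨y, by rw [smul_eq_mul]; ring⟩
  · rintro ⟨k, rfl⟩; exact ⟨k, by rw [smul_eq_mul]; ring⟩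

lemma key_pi_range (n : ℕ) :
    (dblHom (Fin n → ℤ)).range = AddSubgroup.pi Set.univ (fun _ => (dblHom ℤ).range) := by
  ext f
  simp only [AddMonoidHom.mem_range, dblHom_apply, AddSubgroup.mem_pi, Set.mem_univ, true_implies]
  constructor
  · rintro ⟨g, rfl⟩; exact fun i => ⟨g i, rfl⟩
  · intro h
    choose g hg using h
    exact ⟨g, funext hg⟩

lemma key_pi_ker (n : ℕ) : (dblHom (Fin n → ℤ)).ker = ⊥ := by
  ext f
  simp only [AddMonoidHom.mem_ker, dblHom_apply, AddSubgroup.mem_bot]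
  constructor
  · intro h
    have h2 : (2 : ℤ) • f = 0 := by rw [two_smul]; exact h
    exact (smul_eq_zero.mp h2).resolve_left (by norm_num)
  · rintro rfl; simp

lemma key_fin (T : Type) [AddCommGroup T] [Finite T] :
    (dblHom T).range.index = Nat.card (dblHom T).ker ∧ (dblHom T).range.index ≠ 0 := by
  have h1 : Nat.card T = (dblHom T).range.index * Nat.card (dblHom T).range :=
    AddSubgroup.card_eq_card_quotient_mul_card_addSubgroup _
  have h2 : Nat.card T = Nat.card (dblHom T).range * Nat.card (dblHom T).ker := by
    have e := QuotientAddGroup.quotientKerEquivRange (dblHom T)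
    have h3 : Nat.card T = Nat.card (T ⧸ (dblHom T).ker) * Nat.card (dblHom T).ker :=
      AddSubgroup.card_eq_card_quotient_mul_card_addSubgroup _
    rw [h3, Nat.card_congr e.toEquiv]
  have hr : Nat.card (dblHom T).range ≠ 0 := Nat.card_pos.ne'
  constructor
  · have : (dblHom T).range.index * Nat.card (dblHom T).range
        = Nat.card (dblHom T).ker * Nat.card (dblHom T).range := by
      rw [← h1, h2, mul_comm]
    exact Nat.eq_of_mul_eq_mul_right (Nat.pos_of_ne_zero hr) this
  · intro h
    have := h1
    rw [h, zero_mul] at this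
    exact absurd this Nat.card_pos.ne'

lemma key_rank_zero (T : Type*) [AddCommGroup T] [Finite T] : Module.rank ℤ T = 0 := by
  rw [rank_eq_zero_iff]
  intro x
  refine ⟨(addOrderOf x : ℤ), ?_, ?_⟩
  · exact_mod_cast (addOrderOf_pos x).ne'
  · rw [natCast_zsmul, addOrderOf_nsmul_eq_zero]

lemma key_prod (n : ℕ) (T : Type) [AddCommGroup T] [Finite T] :
    KeyStmt ((Fin n → ℤ) × T) := by
  have hrange : (dblHom ((Fin n → ℤ) × T)).range
      = ((dblHom (Fin n → ℤ)).range).prod ((dblHom T).range) := by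
    ext x
    simp only [AddMonoidHom.mem_range, dblHom_apply, AddSubgroup.mem_prod]
    constructor
    · rintro ⟨y, rfl⟩; exact ⟨⟨y.1, rfl⟩, ⟨y.2, rfl⟩⟩
    · rintro ⟨⟨y1, hy1⟩, ⟨y2, hy2⟩⟩
      exact ⟨(y1, y2), Prod.ext hy1 hy2⟩
  have hker : (dblHom ((Fin n → ℤ) × T)).ker
      = ((dblHom (Fin n → ℤ)).ker).prod ((dblHom T).ker) := by
    ext x
    simp only [AddMonoidHom.mem_ker, dblHom_apply, AddSubgroup.mem_prod, Prod.ext_iff]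
    exact Iff.rfl
  have hidxF : (dblHom (Fin n → ℤ)).range.index = 2 ^ n := by
    rw [key_pi_range, AddSubgroup.index_pi, key_int, Int.index_zmultiples]
    norm_num
  have hfr : Module.finrank ℤ ((Fin n → ℤ) × T) = n := by
    have hle : Module.rank ℤ ((Fin n → ℤ) × T) ≤ n := by
      apply rank_le
      intro s li
      have hm0 : ((Nat.card T : ℤ)) ≠ 0 := by
        exact_mod_cast Nat.card_pos.ne'
      have li2 : LinearIndependent ℤ
          (fun i : s => (Nat.card T : ℤ) • ((i : (Fin n → ℤ) × T).1)) := by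
        rw [Fintype.linearIndependent_iff] at li ⊢
        intro c hc i
        have h2 : ∑ j : s, ((Nat.card T : ℤ) * c j) • ((j : (Fin n → ℤ) × T)) = 0 := by
          rw [Prod.ext_iff]
          constructor
          · rw [Prod.fst_sum]
            simp only [Prod.smul_fst, Prod.fst_zero]
            calc ∑ j : s, ((Nat.card T : ℤ) * c j) • ((j : (Fin n → ℤ) × T).1)
                = ∑ j : s, c j • ((Nat.card T : ℤ) • ((j : (Fin n → ℤ) × T).1)) := by
                  refine Finset.sum_congr rfl fun j _ => ?_
                  rw [mul_comm, mul_smul]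
              _ = 0 := hc
          · rw [Prod.snd_sum]
            simp only [Prod.smul_snd, Prod.snd_zero]
            refine Finset.sum_eq_zero fun j _ => ?_
            have hz : (Nat.card T : ℤ) • ((j : (Fin n → ℤ) × T).2) = 0 := by
              rw [natCast_zsmul, card_nsmul_eq_zero']
            rw [mul_smul, smul_comm, hz, smul_zero]
        have := li (fun j => (Nat.card T : ℤ) * c j) h2 i
        exact (mul_eq_zero.mp this).resolve_left hm0
      have hcard := li2.fintype_card_le_finrank
      rwa [Fintype.card_coe, Module.finrank_fin_fun] at hcard
    have hge : (n : Cardinal) ≤ Module.rank ℤ ((Fin n → ℤ) × T) := by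
      have h := rank_add_rank_le_rank_prod (R := ℤ) (M := Fin n → ℤ) (M₁ := T)
      rwa [key_rank_zero T, add_zero, rank_fun', Fintype.card_fin] at h
    have : Module.rank ℤ ((Fin n → ℤ) × T) = n := le_antisymm hle hge
    rw [Module.finrank, this, Cardinal.toNat_natCast]
  obtain ⟨hT1, hT2⟩ := key_fin T
  constructor
  · rw [hrange, AddSubgroup.index_prod', hidxF, hT1, hker, hfr]
    have : Nat.card (((dblHom (Fin n → ℤ)).ker).prod ((dblHom T).ker))
        = Nat.card (dblHom (Fin n → ℤ)).ker * Nat.card (dblHom T).ker := by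
      rw [Nat.card_congr (AddSubgroup.prodEquiv _ _).toEquiv, Nat.card_prod]
    rw [this, key_pi_ker]
    simp
  · rw [hrange, AddSubgroup.index_prod', hidxF]
    positivity

open DirectSum in
lemma key (B : Type*) [AddCommGroup B] [AddGroup.FG B] : KeyStmt B := by
  obtain ⟨n, ι, fι, p, hp, e, ⟨f⟩⟩ := AddCommGroup.equiv_free_prod_directSum_zmod B
  haveI : ∀ i : ι, Finite (ZMod (p i ^ e i)) := fun i => by
    haveI : NeZero (p i ^ e i) := ⟨pow_ne_zero _ (hp i).pos.ne'⟩
    infer_instance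
  haveI : Finite (⨁ i : ι, ZMod (p i ^ e i)) :=
    Finite.of_equiv _ DFinsupp.equivFunOnFintype.symm
  exact key_transport
    (f.trans (AddEquiv.prodCongr Finsupp.addEquivFunOnFinite (AddEquiv.refl _)))
    (key_prod n _)

end Helpers

section MainLemmas

set_option linter.unusedSectionVars false

variable {G A}

lemma tau_cases (hG : Nat.card G = 2) {σ : G} (hσ : σ ≠ 1) (τ : G) : τ = 1 ∨ τ = σ := by
  classical
  have h1 : ({1, σ} : Finset G) ⊆ Finset.univ := Finset.subset_univ _
  have hc : ({1, σ} : Finset G).card = 2 := by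
    rw [Finset.card_insert_of_notMem (by simpa using hσ.symm), Finset.card_singleton]
  have h2 : (Finset.univ : Finset G) = {1, σ} := by
    refine (Finset.eq_of_subset_of_card_le h1 ?_).symm
    rw [hc, Finset.card_univ, ← Nat.card_eq_fintype_card, hG]
  have := Finset.mem_univ τ
  rw [h2, Finset.mem_insert, Finset.mem_singleton] at this
  exact this

lemma sigma_sq (hG : Nat.card G = 2) {σ : G} (hσ : σ ≠ 1) : σ * σ = 1 := by
  rcases tau_cases hG hσ (σ * σ) with h | h
  · exact h
  · exact absurd (mul_right_cancel (h.trans (one_mul σ).symm)) hσ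

lemma sigma_sigma_smul (hG : Nat.card G = 2) {σ : G} (hσ : σ ≠ 1) (a : A) :
    σ • σ • a = a := by
  rw [smul_smul, sigma_sq hG hσ, one_smul]

lemma mem_fixed_iff (hG : Nat.card G = 2) {σ : G} (hσ : σ ≠ 1) {a : A} :
    a ∈ fixedSub G A ↔ σ • a = a := by
  constructor
  · exact fun h => h σ
  · intro h τ
    rcases tau_cases hG hσ τ with rfl | rfl
    · exact one_smul _ _
    · exact h

lemma normMap_apply_s2 (hG : Nat.card G = 2) {σ : G} (hσ : σ ≠ 1) (a : A) :
    normMap G A a = a + σ • a := by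
  classical
  show (∑ τ : G, DistribMulAction.toAddMonoidHom A τ) a = a + σ • a
  rw [AddMonoidHom.finset_sum_apply]
  have h2 : (Finset.univ : Finset G) = {1, σ} := by
    refine (Finset.eq_of_subset_of_card_le (Finset.subset_univ _) ?_).symm
    rw [Finset.card_insert_of_notMem (by simpa using hσ.symm), Finset.card_singleton,
      Finset.card_univ, ← Nat.card_eq_fintype_card, hG]
  rw [h2, Finset.sum_pair (fun h => hσ h.symm)]
  simp [DistribMulAction.toAddMonoidHom]

lemma kerN_eq (hG : Nat.card G = 2) {σ : G} (hσ : σ ≠ 1) :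
    (normMap G A).ker = minusSub G A σ := by
  ext a
  rw [AddMonoidHom.mem_ker, normMap_apply_s2 hG hσ]
  constructor
  · intro h
    exact eq_neg_of_add_eq_zero_right h
  · intro h
    show a + σ • a = 0
    rw [h]; exact add_neg_cancel a

end MainLemmas

/-- For `G = {1, σ}` of order 2 and `A` a finitely generated `G`-module,
`#H¹(G,A) = 2^{r₋(A)} · #(A⁺[2]) / (A : A⁺ + A⁻)`. -/
theorem h1_card_eq_two_pow_rank_minus_mul_card_two_torsion_div_index
    (hG : Nat.card G = 2) (σ : G) (hσ : σ ≠ 1) [AddGroup.FG A] :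
    (H1card G A σ : ℚ) =
      2 ^ (Module.finrank ℤ (minusSub G A σ)) *
        (Nat.card {a : A // a ∈ fixedSub G A ∧ 2 • a = 0} : ℚ) /
        (Nat.card (A ⧸ (fixedSub G A ⊔ minusSub G A σ)) : ℚ) := by
  classical
  set P : AddSubgroup A := fixedSub G A with hPdef
  set M : AddSubgroup A := minusSub G A σ with hMdef
  set Cr : AddSubgroup A := (oneSubMap G A σ).range with hCdef
  set D : AddSubgroup A := AddSubgroup.map (dblHom A) M with hDdef
  -- basic inclusions
  have hCM : Cr ≤ M := by
    rintro x ⟨a, rfl⟩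
    show σ • (oneSubMap G A σ a) = -(oneSubMap G A σ a)
    rw [oneSubMap_apply, smul_sub, sigma_sigma_smul hG hσ, neg_sub]
  have hDC : D ≤ Cr := by
    rintro x hx
    rw [hDdef, AddSubgroup.mem_map] at hx
    obtain ⟨m, hm, rfl⟩ := hx
    refine ⟨m, ?_⟩
    rw [oneSubMap_apply, (show σ • m = -m from hm), sub_neg_eq_add]
    rfl
  have hDM : D ≤ M := hDC.trans hCM
  -- finite generation of M
  haveI : Module.Finite ℤ A := Module.Finite.iff_addGroup_fg.mpr inferInstance
  haveI : IsNoetherian ℤ A := isNoetherian_of_isNoetherianRing_of_finite ℤ A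
  haveI : Module.Finite ℤ ↥M := by
    have hfg : (AddSubgroup.toIntSubmodule M).FG := IsNoetherian.noetherian _
    exact Module.Finite.iff_fg.mpr hfg
  haveI : AddGroup.FG ↥M := Module.Finite.iff_addGroup_fg.mp inferInstance
  obtain ⟨hkey, hkey0⟩ := key (↥M)
  obtain ⟨-, hkeyA0⟩ := key A
  -- H1card as a relative index
  have h1 : H1card G A σ = Cr.relIndex M := by
    unfold H1card
    rw [kerN_eq hG hσ]
    rfl
  -- D.addSubgroupOf M is the range of doubling on M
  have hDrel : D.addSubgroupOf M = (dblHom ↥M).range := by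
    ext x
    rw [AddSubgroup.mem_addSubgroupOf]
    constructor
    · intro hx
      rw [hDdef, AddSubgroup.mem_map] at hx
      obtain ⟨m, hm, heq⟩ := hx
      exact ⟨⟨m, hm⟩, Subtype.ext heq⟩
    · rintro ⟨y, rfl⟩
      rw [hDdef, AddSubgroup.mem_map]
      exact ⟨↑y, y.2, rfl⟩
  have h4 : D.relIndex M = (dblHom ↥M).range.index := by
    rw [AddSubgroup.relIndex, hDrel]
  -- the index of P ⊔ M equals the relative index of D in Cr
  have h2idx : (P ⊔ M).index = D.relIndex Cr := by
    set ψ : A →+ ↥Cr := (oneSubMap G A σ).rangeRestrict with hψdef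
    set φ : A →+ ↥Cr ⧸ (D.addSubgroupOf Cr) :=
      (QuotientAddGroup.mk' (D.addSubgroupOf Cr)).comp ψ with hφdef
    have hφs : Function.Surjective φ :=
      (QuotientAddGroup.mk'_surjective _).comp (oneSubMap G A σ).rangeRestrict_surjective
    have hcoe : ∀ a : A, (↑(ψ a) : A) = a - σ • a := fun a => rfl
    have hkerφ : φ.ker = P ⊔ M := by
      ext a
      rw [AddMonoidHom.mem_ker, hφdef, AddMonoidHom.comp_apply, QuotientAddGroup.mk'_apply,
        QuotientAddGroup.eq_zero_iff, AddSubgroup.mem_addSubgroupOf]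
      constructor
      · intro hx
        rw [hDdef, AddSubgroup.mem_map] at hx
        obtain ⟨m, hm, heq⟩ := hx
        have heq' : m + m = a - σ • a := by rw [← hcoe a, ← heq]; rfl
        rw [AddSubgroup.mem_sup]
        refine ⟨a - m, ?_, m, hm, by abel⟩
        rw [hPdef, mem_fixed_iff hG hσ]
        have hσa : σ • a = a - (m + m) := by rw [heq']; abel
        rw [smul_sub, hσa, (show σ • m = -m from hm)]
        abel
      · intro h
        rw [AddSubgroup.mem_sup] at h
        obtain ⟨p, hp, m, hm, rfl⟩ := h
        rw [hDdef, AddSubgroup.mem_map]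
        refine ⟨m, hm, ?_⟩
        rw [dblHom_apply, hcoe (p + m), smul_add, (mem_fixed_iff hG hσ).mp hp,
          (show σ • m = -m from hm)]
        abel
    have e := QuotientAddGroup.quotientKerEquivOfSurjective φ hφs
    have h5 : φ.ker.index = D.relIndex Cr := by
      rw [AddSubgroup.index, Nat.card_congr e.toEquiv]
      rfl
    rw [← hkerφ, h5]
  have h3 : D.relIndex Cr * Cr.relIndex M = D.relIndex M :=
    AddSubgroup.relIndex_mul_relIndex _ _ _ hDC hCM
  -- identify the 2-torsion subgroups
  have hker_card : Nat.card (dblHom ↥M).ker = Nat.card {a : A // a ∈ P ∧ 2 • a = 0} := by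
    apply Nat.card_congr
    have hadd : ∀ x : (dblHom ↥M).ker, (↑(↑x : ↥M) : A) + ↑(↑x : ↥M) = 0 := by
      intro x
      have hx := x.2
      rw [AddMonoidHom.mem_ker] at hx
      have := congrArg (Subtype.val) hx
      exact this
    have hfwd1 : ∀ x : ↥((dblHom ↥M).ker), (↑(↑x : ↥M) : A) ∈ P := by
      intro x
      rw [hPdef, mem_fixed_iff hG hσ]
      have h6 : -(↑(↑x : ↥M) : A) = ↑(↑x : ↥M) := neg_eq_of_add_eq_zero_left (hadd x)
      rw [(show σ • (↑(↑x : ↥M) : A) = -(↑(↑x : ↥M) : A) from (↑x : ↥M).2), h6]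
    have hfwd2 : ∀ x : ↥((dblHom ↥M).ker), 2 • (↑(↑x : ↥M) : A) = 0 := by
      intro x
      rw [two_nsmul]
      exact hadd x
    have hMem : ∀ y : {a : A // a ∈ P ∧ 2 • a = 0}, (y.1 : A) ∈ M := by
      intro y
      have h7 : (y.1 : A) + y.1 = 0 := by
        have := y.2.2
        rwa [two_nsmul] at this
      show σ • (y.1 : A) = -y.1
      rw [(y.2.1 : ∀ τ : G, τ • (y.1 : A) = y.1) σ]
      exact eq_neg_of_add_eq_zero_left h7
    have hKer : ∀ y : {a : A // a ∈ P ∧ 2 • a = 0},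
        (⟨y.1, hMem y⟩ : ↥M) ∈ (dblHom ↥M).ker := by
      intro y
      rw [AddMonoidHom.mem_ker]
      apply Subtype.ext
      show (y.1 : A) + y.1 = 0
      have := y.2.2
      rwa [two_nsmul] at this
    exact ⟨fun x => ⟨↑(↑x : ↥M), hfwd1 x, hfwd2 x⟩, fun y => ⟨⟨y.1, hMem y⟩, hKer y⟩,
      fun x => by apply Subtype.ext; apply Subtype.ext; rfl,
      fun y => by apply Subtype.ext; rfl⟩
  -- nonvanishing of the index
  have h2A : (dblHom A).range ≤ P ⊔ M := by
    rintro x ⟨a, rfl⟩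
    rw [AddSubgroup.mem_sup]
    refine ⟨a + σ • a, ?_, a - σ • a, hCM ⟨a, rfl⟩, ?_⟩
    · rw [hPdef, mem_fixed_iff hG hσ]
      rw [smul_add, sigma_sigma_smul hG hσ, add_comm]
    · show (a + σ • a) + (a - σ • a) = dblHom A a
      rw [dblHom_apply]
      abel
  have hidx0 : (P ⊔ M).index ≠ 0 := by
    intro h0
    have hdvd := AddSubgroup.index_dvd_of_le h2A
    rw [h0] at hdvd
    exact hkeyA0 (zero_dvd_iff.mp hdvd)
  -- the natural-number identity
  have hNat : H1card G A σ * (P ⊔ M).index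
      = 2 ^ Module.finrank ℤ ↥M * Nat.card {a : A // a ∈ P ∧ 2 • a = 0} := by
    rw [h1, h2idx, mul_comm, h3, h4, hkey, hker_card]
  -- conclude over ℚ
  have hidxQ : ((Nat.card (A ⧸ (P ⊔ M)) : ℚ)) ≠ 0 := by
    exact_mod_cast hidx0
  rw [eq_div_iff hidxQ]
  have : (Nat.card (A ⧸ (P ⊔ M)) : ℚ) = ((P ⊔ M).index : ℚ) := rfl
  rw [this]
  exact_mod_cast hNat
end

section
/- Let K be a CM number field with maximal real subfield F = K⁺. Then (U_K : U_F · W_K) divides 2, where U_K, U_F are the unit groups and W_K the roots of unity in K. -/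
open NumberField

/-- The unit group `U_K = (𝓞 K)ˣ`, realized as a subgroup of `Kˣ`. -/
noncomputable def UK (K : Type*) [Field K] [NumberField K] : Subgroup Kˣ :=
  (Units.map (algebraMap (𝓞 K) K).toMonoidHom).range

/-- The unit group `U_F = (𝓞 F)ˣ`, realized as a subgroup of `Kˣ` for an extension `K/F`. -/
noncomputable def UFinK (F K : Type*) [Field F] [NumberField F] [Field K] [NumberField K]
    [Algebra F K] : Subgroup Kˣ :=
  (Units.map ((algebraMap F K).comp (algebraMap (𝓞 F) F)).toMonoidHom).range

open Polynomial in
/-- Any degree 2 field extension is normal. -/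
theorem CMaux.normal_of_finrank_two (F K : Type*) [Field F] [Field K] [Algebra F K]
    (hd : Module.finrank F K = 2) : Normal F K := by
  have : FiniteDimensional F K := Module.finite_of_finrank_eq_succ hd
  refine normal_iff.mpr fun x => ⟨IsIntegral.of_finite F x, ?_⟩
  set p := minpoly F x
  set q := p.map (algebraMap F K) with hq
  have hroot : q.IsRoot x := by
    rw [Polynomial.IsRoot, Polynomial.eval_map, ← Polynomial.aeval_def]
    exact minpoly.aeval F x
  have hfac := (Polynomial.mul_divByMonic_eq_iff_isRoot (p := q) (a := x)).2 hroot
  rw [← hfac]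
  refine Polynomial.Splits.mul (Polynomial.Splits.X_sub_C _) ?_
  refine Polynomial.Splits.of_natDegree_le_one ?_
  have h1 : q.natDegree ≤ 2 := by
    rw [hq, Polynomial.natDegree_map]
    exact hd ▸ minpoly.natDegree_le x
  have h2 := Polynomial.natDegree_divByMonic q (Polynomial.monic_X_sub_C x)
  rw [h2, Polynomial.natDegree_X_sub_C]
  omega

/-- Any embedding of a CM field into `ℂ` intertwines the nontrivial automorphism over the
maximal real subfield with complex conjugation. -/
theorem CMaux.conj_key {F K : Type*} [Field F] [NumberField F] [Field K] [NumberField K]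
    [Algebra F K] (hd : Module.finrank F K = 2)
    (htr : ∀ v : InfinitePlace F, v.IsReal) (htc : ∀ w : InfinitePlace K, w.IsComplex)
    (σ : K ≃ₐ[F] K) (hσ : σ ≠ 1) (ψ : K →+* ℂ) (x : K) :
    ψ (σ x) = (starRingEnd ℂ) (ψ x) := by
  haveI : FiniteDimensional F K := Module.finite_of_finrank_eq_succ hd
  letI : Algebra F ℂ := (ψ.comp (algebraMap F K)).toAlgebra
  have hreal : ∀ r : F, (starRingEnd ℂ) (ψ (algebraMap F K r)) = ψ (algebraMap F K r) := by
    intro r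
    have h1 : (InfinitePlace.mk (ψ.comp (algebraMap F K))).IsReal := htr _
    rw [NumberField.InfinitePlace.isReal_mk_iff,
      NumberField.ComplexEmbedding.isReal_iff] at h1
    exact RingHom.congr_fun h1 r
  let a : K →ₐ[F] ℂ := { toRingHom := ψ, commutes' := fun r => rfl }
  let rb : K →+* ℂ := RingHom.comp (starRingEnd ℂ) ψ
  let b : K →ₐ[F] ℂ := { toRingHom := rb, commutes' := fun r => hreal r }
  let rc : K →+* ℂ := ψ.comp (σ : K →+* K)
  let c : K →ₐ[F] ℂ := { toRingHom := rc, commutes' := fun r => by show ψ (σ (algebraMap F K r)) = _; rw [σ.commutes r]; rfl }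
  have hcard : Fintype.card (K →ₐ[F] ℂ) = 2 := by
    rw [AlgHom.card]; exact hd
  have hab : a ≠ b := by
    intro h
    have h2 : NumberField.ComplexEmbedding.IsReal ψ := by
      rw [NumberField.ComplexEmbedding.isReal_iff]
      ext z
      exact (DFunLike.congr_fun h z).symm
    have h3 : (InfinitePlace.mk ψ).IsReal := NumberField.InfinitePlace.isReal_mk_iff.mpr h2
    exact (NumberField.InfinitePlace.not_isReal_iff_isComplex.mpr (htc _)) h3
  have hac : a ≠ c := by
    intro h
    apply hσ
    ext z
    have := DFunLike.congr_fun h z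
    simp only [a, c] at this
    exact (ψ.injective (by exact this.symm))
  have hbc : b = c := by
    by_contra hbc
    classical
    have : 3 ≤ Fintype.card (K →ₐ[F] ℂ) := by
      have h3 : ({a, b, c} : Finset (K →ₐ[F] ℂ)).card = 3 := by
        rw [Finset.card_insert_of_notMem (by simp [hab, hac]),
          Finset.card_insert_of_notMem (by simp [hbc]), Finset.card_singleton]
      calc 3 = ({a, b, c} : Finset (K →ₐ[F] ℂ)).card := h3.symm
        _ ≤ Fintype.card (K →ₐ[F] ℂ) := Finset.card_le_univ _
    omega
  have := DFunLike.congr_fun hbc x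
  exact this.symm

/-- An element of `K` fixed by the nontrivial automorphism of a quadratic extension `K/F`
lies in the image of `F`. -/
theorem CMaux.fixed_mem_range {F K : Type*} [Field F] [Field K] [Algebra F K]
    (hd : Module.finrank F K = 2) (σ : K ≃ₐ[F] K) (hσ : σ ≠ 1)
    {v : K} (hv : σ v = v) : v ∈ (algebraMap F K).range := by
  have hs := Subalgebra.isSimpleOrder_of_finrank (F := F) (E := K) hd
  set E := AlgHom.equalizer (σ : K →ₐ[F] K) (AlgHom.id F K) with hE
  rcases hs.eq_bot_or_eq_top E with h | h
  · have hvE : v ∈ E := by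
      simp only [hE, AlgHom.mem_equalizer]
      simpa using hv
    rw [h, Algebra.mem_bot] at hvE
    obtain ⟨r, hr⟩ := hvE
    exact ⟨r, hr⟩
  · exfalso
    apply hσ
    ext z
    have hz : z ∈ E := h ▸ Algebra.mem_top
    simpa [hE, AlgHom.mem_equalizer] using hz

section helpers

variable {K : Type*} [Field K] [NumberField K]

theorem CMaux.mem_UK {x : Kˣ} (h1 : IsIntegral ℤ (x : K))
    (h2 : IsIntegral ℤ ((x⁻¹ : Kˣ) : K)) : x ∈ UK K := by
  refine ⟨⟨⟨(x : K), h1⟩, ⟨((x⁻¹ : Kˣ) : K), h2⟩, ?_, ?_⟩, ?_⟩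
  · ext
    push_cast
    show (x : K) * ((x : K))⁻¹ = 1
    exact mul_inv_cancel₀ x.ne_zero
  · ext
    push_cast
    show ((x : K))⁻¹ * (x : K) = 1
    exact inv_mul_cancel₀ x.ne_zero
  · ext
    rfl

theorem CMaux.UK_isIntegral {x : Kˣ} (hx : x ∈ UK K) : IsIntegral ℤ (x : K) := by
  obtain ⟨u, rfl⟩ := hx
  exact RingOfIntegers.isIntegral_coe (u : 𝓞 K)

theorem CMaux.UK_inv_isIntegral {x : Kˣ} (hx : x ∈ UK K) : IsIntegral ℤ ((x⁻¹ : Kˣ) : K) :=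
  CMaux.UK_isIntegral (inv_mem hx)

open Polynomial in
theorem CMaux.isIntegral_of_pow_eq_one {y : Kˣ} {n : ℕ} (hn : 0 < n) (hy : y ^ n = 1) :
    IsIntegral ℤ (y : K) := by
  refine ⟨X ^ n - 1, ?_, ?_⟩
  · have := Polynomial.monic_X_pow_sub_C (1 : ℤ) hn.ne'
    simpa using this
  · have hyK : (y : K) ^ n = 1 := by
      have := congrArg (Units.val) hy
      push_cast at this
      exact this
    simp [Polynomial.eval₂_sub, hyK]

theorem CMaux.torsion_le_UK : CommGroup.torsion Kˣ ≤ UK K := by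
  intro x hx
  rw [CommGroup.mem_torsion, isOfFinOrder_iff_pow_eq_one] at hx
  obtain ⟨n, hn, hxn⟩ := hx
  refine CMaux.mem_UK (CMaux.isIntegral_of_pow_eq_one hn hxn) ?_
  exact CMaux.isIntegral_of_pow_eq_one hn (by rw [inv_pow, hxn, inv_one])

theorem CMaux.torsion_eq_map :
    CommGroup.torsion Kˣ =
      Subgroup.map (Units.map (algebraMap (𝓞 K) K).toMonoidHom) (Units.torsion K) := by
  have hinj : Function.Injective (Units.map (algebraMap (𝓞 K) K).toMonoidHom) :=
    Units.map_injective (fun a b h => RingOfIntegers.ext h)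
  ext x
  constructor
  · intro hx
    obtain ⟨u, hu⟩ := CMaux.torsion_le_UK hx
    rw [CommGroup.mem_torsion, isOfFinOrder_iff_pow_eq_one] at hx
    obtain ⟨n, hn, hxn⟩ := hx
    refine ⟨u, ?_, hu⟩
    show u ∈ CommGroup.torsion (𝓞 K)ˣ
    rw [CommGroup.mem_torsion, isOfFinOrder_iff_pow_eq_one]
    refine ⟨n, hn, hinj ?_⟩
    rw [map_pow, hu, map_one]
    exact hxn
  · rintro ⟨u, hu, rfl⟩
    have hu' : u ∈ CommGroup.torsion (𝓞 K)ˣ := hu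
    rw [CommGroup.mem_torsion, isOfFinOrder_iff_pow_eq_one] at hu'
    obtain ⟨n, hn, hun⟩ := hu'
    rw [CommGroup.mem_torsion, isOfFinOrder_iff_pow_eq_one]
    exact ⟨n, hn, by rw [← map_pow, hun, map_one]⟩

theorem CMaux.finite_torsion : Finite (CommGroup.torsion Kˣ) := by
  rw [CMaux.torsion_eq_map]
  have hinj : Function.Injective (Units.map (algebraMap (𝓞 K) K).toMonoidHom) :=
    Units.map_injective (fun a b h => RingOfIntegers.ext h)
  exact Finite.of_equiv _ ((Units.torsion K).equivMapOfInjective _ hinj).toEquiv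

theorem CMaux.isCyclic_torsion : IsCyclic (CommGroup.torsion Kˣ) := by
  rw [CMaux.torsion_eq_map]
  have hinj : Function.Injective (Units.map (algebraMap (𝓞 K) K).toMonoidHom) :=
    Units.map_injective (fun a b h => RingOfIntegers.ext h)
  exact isCyclic_of_surjective _ ((Units.torsion K).equivMapOfInjective _ hinj).surjective

end helpers

/-- Let `K` be a CM number field with maximal real subfield `F = K⁺`.
Then `(U_K : U_F · W_K)` divides `2`, where `W_K` is the group of roots of unity in `K`. -/
theorem cm_index_units_dvd_two (F K : Type*) [Field F] [NumberField F] [Field K]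
    [NumberField K] [Algebra F K] (hd : Module.finrank F K = 2)
    (htr : ∀ v : InfinitePlace F, v.IsReal) (htc : ∀ w : InfinitePlace K, w.IsComplex) :
    Nat.card (UK K ⧸ ((UFinK F K ⊔ (CommGroup.torsion Kˣ ⊓ UK K)).subgroupOf (UK K))) ∣ 2 := by
  classical
  haveI : FiniteDimensional F K := Module.finite_of_finrank_eq_succ hd
  haveI : Normal F K := CMaux.normal_of_finrank_two F K hd
  haveI : IsGalois F K := {}
  have hcard2 : Fintype.card (K ≃ₐ[F] K) = 2 := by
    rw [← Nat.card_eq_fintype_card, IsGalois.card_aut_eq_finrank]; exact hd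
  obtain ⟨σ, hσ⟩ := Fintype.exists_ne_of_one_lt_card (by omega) (1 : K ≃ₐ[F] K)
  have key := CMaux.conj_key hd htr htc σ hσ
  set T : Subgroup Kˣ := CommGroup.torsion Kˣ with hT
  let s : Kˣ →* Kˣ := Units.map ((σ : K →+* K) : K →* K)
  have hs_coe : ∀ x : Kˣ, ((s x : Kˣ) : K) = σ (x : K) := fun x => rfl
  let φm : Kˣ →* Kˣ := MonoidHom.mk' (fun x => x * (s x)⁻¹) (fun a b => by
    simp only [map_mul, mul_inv]
    exact mul_mul_mul_comm _ _ _ _)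
  have hφm : ∀ x : Kˣ, φm x = x * (s x)⁻¹ := fun x => rfl
  let T2 : Subgroup Kˣ := T.map (powMonoidHom 2)
  let q : Kˣ →* Kˣ ⧸ T2 := QuotientGroup.mk' T2
  let Φ : ↥(UK K) →* Kˣ ⧸ T2 := q.comp (φm.comp (UK K).subtype)
  -- conjugation inverts torsion elements
  have htorsconj : ∀ ζ : Kˣ, ζ ∈ T → s ζ = ζ⁻¹ := by
    intro ζ hζ
    rw [hT, CommGroup.mem_torsion, isOfFinOrder_iff_pow_eq_one] at hζ
    obtain ⟨n, hn, hzn⟩ := hζ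
    have ψ := (Classical.arbitrary (InfinitePlace K)).embedding
    apply Units.ext
    rw [hs_coe]
    apply ψ.injective
    rw [key ψ]
    have hζK : (ζ : K) ^ n = 1 := by
      have := congrArg (Units.val) hzn; push_cast at this; exact this
    have hnorm : ‖ψ (ζ : K)‖ = 1 := by
      have h1 : ‖ψ (ζ : K)‖ ^ n = 1 := by
        rw [← norm_pow, ← map_pow, hζK, map_one, norm_one]
      have h0 : (0 : ℝ) ≤ ‖ψ (ζ : K)‖ := norm_nonneg _
      by_contra hne
      rcases lt_or_gt_of_ne hne with hlt | hgt
      · exact (pow_lt_one₀ h0 hlt hn.ne').ne h1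
      · exact (one_lt_pow₀ hgt hn.ne').ne' h1
    have hmc : ψ (ζ : K) * (starRingEnd ℂ) (ψ (ζ : K)) = 1 := by
      rw [Complex.mul_conj]
      norm_cast
      rw [Complex.normSq_eq_norm_sq, hnorm]
      norm_num
    have hconj : (starRingEnd ℂ) (ψ (ζ : K)) = (ψ (ζ : K))⁻¹ :=
      eq_inv_of_mul_eq_one_right hmc
    rw [hconj, Units.val_inv_eq_inv_val, map_inv₀]
  -- the map u ↦ u / σ(u) sends units to torsion elements
  have hrange : ∀ u : Kˣ, u ∈ UK K → φm u ∈ T := by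
    intro u hu
    have hint : IsIntegral ℤ ((φm u : Kˣ) : K) := by
      have h1 : IsIntegral ℤ (u : K) := CMaux.UK_isIntegral hu
      have h2 : IsIntegral ℤ ((u⁻¹ : Kˣ) : K) := CMaux.UK_inv_isIntegral hu
      have h3 : IsIntegral ℤ (σ ((u⁻¹ : Kˣ) : K)) :=
        IsIntegral.map ((σ : K →+* K).toIntAlgHom) h2
      have : ((φm u : Kˣ) : K) = (u : K) * σ ((u⁻¹ : Kˣ) : K) := by
        rw [hφm]
        push_cast
        rw [hs_coe, map_inv₀]
      rw [this]
      exact h1.mul h3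
    have hnorm : ∀ ψ : K →+* ℂ, ‖ψ ((φm u : Kˣ) : K)‖ = 1 := by
      intro ψ
      have hcoe : ((φm u : Kˣ) : K) = (u : K) * (σ ((u : Kˣ) : K))⁻¹ := by
        rw [hφm]
        push_cast
        rw [hs_coe]
      rw [hcoe, map_mul, map_inv₀, norm_mul, norm_inv, key ψ]
      have hne : ψ ((u : Kˣ) : K) ≠ 0 := by
        simp [map_ne_zero, Units.ne_zero]
      rw [RCLike.norm_conj]
      field_simp
    obtain ⟨n, hn, hpow⟩ :=
      NumberField.Embeddings.pow_eq_one_of_norm_eq_one K ℂ hint hnorm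
    rw [hT, CommGroup.mem_torsion, isOfFinOrder_iff_pow_eq_one]
    refine ⟨n, hn, Units.ext ?_⟩
    push_cast
    exact hpow
  -- the kernel of Φ is contained in the subgroup generated by U_F and torsion
  have hker : Φ.ker ≤ (UFinK F K ⊔ (T ⊓ UK K)).subgroupOf (UK K) := by
    intro u hu
    rw [MonoidHom.mem_ker] at hu
    have h2 : φm (u : Kˣ) ∈ T2 := (QuotientGroup.eq_one_iff _).mp hu
    obtain ⟨ζ, hζT, hζeq⟩ := h2
    have hζ2 : ζ ^ 2 = φm (u : Kˣ) := hζeq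
    rw [Subgroup.mem_subgroupOf]
    have hζU : ζ ∈ UK K := CMaux.torsion_le_UK hζT
    have hsζ : s ζ = ζ⁻¹ := htorsconj ζ hζT
    set v : Kˣ := (u : Kˣ) * ζ⁻¹ with hv
    have hsv : s v = v := by
      have h5 : s (u : Kˣ) * ζ ^ 2 = (u : Kˣ) := by
        rw [hζ2, hφm, mul_comm ((u : Kˣ)) (s (u : Kˣ))⁻¹, mul_inv_cancel_left]
      have h6 : s v = s (u : Kˣ) * ζ := by
        rw [hv, map_mul, map_inv, hsζ, inv_inv]
      rw [h6, hv]
      conv_rhs => rw [← h5]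
      group
    have hvfix : σ ((v : Kˣ) : K) = ((v : Kˣ) : K) := by
      have := congrArg Units.val hsv
      rw [hs_coe] at this
      exact this
    have hvF : ((v : Kˣ) : K) ∈ (algebraMap F K).range :=
      CMaux.fixed_mem_range hd σ hσ hvfix
    have hvU : v ∈ UK K := mul_mem u.2 (inv_mem hζU)
    have hvUF : v ∈ UFinK F K := by
      obtain ⟨y, hy⟩ := hvF
      have hy0 : y ≠ 0 := by
        intro h0
        rw [h0, map_zero] at hy
        exact (Units.ne_zero v) hy.symm
      have hyint : IsIntegral ℤ y := by
        rw [← isIntegral_algebraMap_iff (algebraMap F K).injective, hy]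
        exact CMaux.UK_isIntegral hvU
      have hyinv : IsIntegral ℤ y⁻¹ := by
        rw [← isIntegral_algebraMap_iff (algebraMap F K).injective, map_inv₀, hy,
          ← Units.val_inv_eq_inv_val]
        exact CMaux.UK_inv_isIntegral hvU
      refine ⟨⟨⟨y, hyint⟩, ⟨y⁻¹, hyinv⟩, ?_, ?_⟩, ?_⟩
      · ext
        push_cast
        show y * y⁻¹ = 1
        exact mul_inv_cancel₀ hy0
      · ext
        push_cast
        show y⁻¹ * y = 1
        exact inv_mul_cancel₀ hy0
      · ext
        show algebraMap F K (algebraMap (𝓞 F) F ⟨y, hyint⟩) = ((v : Kˣ) : K)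
        rw [show algebraMap (𝓞 F) F ⟨y, hyint⟩ = y from rfl]
        exact hy
    have huvζ : (u : Kˣ) = v * ζ := by
      rw [hv]
      group
    rw [huvζ]
    exact mul_mem (Subgroup.mem_sup_left hvUF) (Subgroup.mem_sup_right ⟨hζT, hζU⟩)
  -- counting
  set H : Subgroup ↥(UK K) := (UFinK F K ⊔ (T ⊓ UK K)).subgroupOf (UK K) with hH
  have d1 : Nat.card (↥(UK K) ⧸ H) ∣ Nat.card (↥(UK K) ⧸ Φ.ker) := by
    have e1 := QuotientGroup.quotientQuotientEquivQuotient Φ.ker H hker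
    rw [← Nat.card_congr e1.toEquiv]
    exact ⟨_, Subgroup.card_eq_card_quotient_mul_card_subgroup _⟩
  have d2 : Nat.card (↥(UK K) ⧸ Φ.ker) = Nat.card Φ.range :=
    Nat.card_congr (QuotientGroup.quotientKerEquivRange Φ).toEquiv
  set Tbar : Subgroup (Kˣ ⧸ T2) := T.map q with hTbar
  have d3 : Φ.range ≤ Tbar := by
    rintro - ⟨u, rfl⟩
    exact ⟨φm (u : Kˣ), hrange (u : Kˣ) u.2, rfl⟩
  have d4 : Nat.card Φ.range ∣ Nat.card Tbar := Subgroup.card_dvd_of_le d3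
  have d5 : Nat.card Tbar ∣ 2 := by
    haveI : IsCyclic T := CMaux.isCyclic_torsion
    haveI : IsCyclic ↥Tbar := isCyclic_of_surjective (q.subgroupMap T)
      (MonoidHom.subgroupMap_surjective q T)
    obtain ⟨g, hg⟩ := IsCyclic.exists_generator (α := ↥Tbar)
    have hg2 : g ^ 2 = 1 := by
      obtain ⟨t, ht, hteq⟩ := g.2
      have hsq : ((g : Kˣ ⧸ T2)) ^ 2 = 1 := by
        rw [← hteq, ← map_pow]
        rw [QuotientGroup.mk'_apply, QuotientGroup.eq_one_iff]
        exact ⟨t, ht, rfl⟩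
      ext
      push_cast
      exact hsq
    have hcg : Nat.card ↥Tbar = orderOf g := by
      rw [← Nat.card_zpowers, (Subgroup.eq_top_iff' _).mpr hg]
      exact (Nat.card_congr Subgroup.topEquiv.toEquiv).symm
    rw [hcg]
    exact orderOf_dvd_of_pow_eq_one hg2
  calc Nat.card (↥(UK K) ⧸ H) ∣ Nat.card (↥(UK K) ⧸ Φ.ker) := d1
    _ = Nat.card Φ.range := d2
    _ ∣ Nat.card Tbar := d4
    _ ∣ 2 := d5
end
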